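/- arXiv:1912.11483 — 8 statements merged into one kernel-verified Lean document; each statement's English description precedes it below -/
import Mathlib

section
/- Let F(x) := ∫₀ˣ (1−t⁶)^{−1/2} dt for x ∈ [0,1]. For every s ∈ [0,1], set y := 2s√(1−s⁶)/√(1+8s⁶) (note y ∈ [0,1]). If 2F(s) ≤ F(1), then F(y) = 2F(s); if 2F(s) ≥ F(1), then F(y) = 2F(1) − 2F(s). (This is Shinohara's double-angle formula sin_{2,6}(2x) = 2 sin_{2,6}x cos_{2,6}x / √(1+8 sin_{2,6}⁶x) for x ∈ [0, π_{2,6}/2].) -/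
open Real MeasureTheory Set intervalIntegral

/-- `F = F_{2,6}`, the incomplete integral `∫₀ˣ (1−t⁶)^{−1/2} dt`. -/
noncomputable def F26 (x : ℝ) : ℝ := ∫ t in (0:ℝ)..x, (1 - t ^ 6) ^ (-(1/2) : ℝ)

namespace Shino

noncomputable def f26 (t : ℝ) : ℝ := (1 - t ^ 6) ^ (-(1/2) : ℝ)

lemma F26_eq (x : ℝ) : F26 x = ∫ t in (0:ℝ)..x, f26 t := rfl

lemma f26_meas : Measurable f26 := by unfold f26; fun_prop

lemma rpow_neg_half (X : ℝ) (hX : 0 ≤ X) : X ^ (-(1/2) : ℝ) = (Real.sqrt X)⁻¹ := by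
  rw [Real.rpow_neg hX, Real.sqrt_eq_rpow]

lemma f26_nonneg {t : ℝ} (h : t ≤ 1) (h0 : 0 ≤ t) : 0 ≤ f26 t := by
  have : (0:ℝ) ≤ 1 - t ^ 6 := by nlinarith [pow_le_one₀ h0 h (n := 6)]
  exact Real.rpow_nonneg this _

lemma f26_integrable : IntervalIntegrable f26 volume 0 1 := by
  have hg : IntervalIntegrable (fun t : ℝ => (1 - t) ^ (-(1/2) : ℝ)) volume 0 1 := by
    have := (intervalIntegral.intervalIntegrable_rpow' (a := 0) (b := 1)
      (r := -(1/2)) (by norm_num)).comp_sub_left 1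
    simpa using this.symm
  refine hg.mono_fun' f26_meas.aestronglyMeasurable ?_
  filter_upwards [MeasureTheory.ae_restrict_mem measurableSet_uIoc] with t ht
  rw [Set.uIoc_of_le (by norm_num : (0:ℝ) ≤ 1)] at ht
  obtain ⟨ht0, ht1⟩ := ht
  have h6 : t ^ 6 ≤ t := by
    calc t ^ 6 ≤ t ^ 1 := pow_le_pow_of_le_one ht0.le ht1 (by norm_num)
    _ = t := pow_one t
  have hb : (0:ℝ) ≤ 1 - t ^ 6 := by nlinarith
  have hnorm : ‖f26 t‖ = f26 t := Real.norm_of_nonneg (Real.rpow_nonneg hb _)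
  rw [hnorm]
  rcases eq_or_lt_of_le ht1 with h | h
  · subst h
    simp [f26, Real.zero_rpow (by norm_num : -(1/2:ℝ) ≠ 0)]
  · have h1t : (0:ℝ) < 1 - t := by linarith
    exact Real.rpow_le_rpow_of_nonpos h1t (by linarith) (by norm_num)

lemma f26_intInt {x y : ℝ} (h0 : 0 ≤ x) (hxy : x ≤ y) (h1 : y ≤ 1) :
    IntervalIntegrable f26 volume x y := by
  apply f26_integrable.mono_set
  rw [Set.uIcc_of_le hxy, Set.uIcc_of_le (by norm_num : (0:ℝ) ≤ 1)]
  exact Set.Icc_subset_Icc h0 h1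

lemma F26_cont : ContinuousOn F26 (Icc 0 1) := by
  have h : IntegrableOn f26 (uIcc 0 1) volume := by
    rw [Set.uIcc_of_le (by norm_num : (0:ℝ) ≤ 1)]
    exact (integrableOn_Icc_iff_integrableOn_Ioc).2
      ((intervalIntegrable_iff_integrableOn_Ioc_of_le (by norm_num)).1 f26_integrable)
  have := intervalIntegral.continuousOn_primitive_interval (a := 0) (b := 1) (μ := volume) h
  rw [Set.uIcc_of_le (by norm_num : (0:ℝ) ≤ 1)] at this
  exact this

lemma F26_mono {x y : ℝ} (h0 : 0 ≤ x) (hxy : x ≤ y) (h1 : y ≤ 1) : F26 x ≤ F26 y := by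
  have hadd := intervalIntegral.integral_add_adjacent_intervals
    (f26_intInt le_rfl h0 (le_trans hxy h1)) (f26_intInt h0 hxy h1)
  have hnn : 0 ≤ ∫ t in x..y, f26 t :=
    intervalIntegral.integral_nonneg hxy (fun u hu => f26_nonneg (le_trans hu.2 h1) (le_trans h0 hu.1))
  rw [F26_eq, F26_eq, ← hadd]
  linarith

lemma F26_hasDerivAt {v : ℝ} (h0 : 0 ≤ v) (h1 : v < 1) :
    HasDerivAt F26 ((1 - v ^ 6) ^ (-(1/2) : ℝ)) v := by
  have hv6 : v ^ 6 < 1 := pow_lt_one₀ h0 h1 (by norm_num)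
  have hpos : (0:ℝ) < 1 - v ^ 6 := by linarith
  have hcont : ContinuousAt f26 v := by
    have h1 : ContinuousAt (fun t : ℝ => 1 - t ^ 6) v :=
      (continuous_const.sub (continuous_pow 6)).continuousAt
    exact h1.rpow_const (Or.inl (ne_of_gt hpos))
  exact intervalIntegral.integral_hasDerivAt_right
    (f26_intInt le_rfl h0 h1.le)
    f26_meas.stronglyMeasurable.stronglyMeasurableAtFilter hcont

noncomputable def Y (s : ℝ) : ℝ := 2 * s * Real.sqrt (1 - s ^ 6) / Real.sqrt (1 + 8 * s ^ 6)

noncomputable def C (s : ℝ) : ℝ := 1 - 20 * s ^ 6 - 8 * s ^ 12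

lemma C_anti {x s : ℝ} (h0 : 0 ≤ x) (hxs : x < s) : C s < C x := by
  have h6 : x ^ 6 < s ^ 6 := pow_lt_pow_left₀ hxs h0 (by norm_num)
  have h12 : x ^ 12 < s ^ 12 := pow_lt_pow_left₀ hxs h0 (by norm_num)
  unfold C; linarith

lemma one_sub_Y_pow {s : ℝ} (h0 : 0 ≤ s) (h1 : s ≤ 1) :
    1 - (Y s) ^ 6 = (C s) ^ 2 / (1 + 8 * s ^ 6) ^ 3 := by
  have hA : (0:ℝ) ≤ 1 - s ^ 6 := by nlinarith [pow_le_one₀ h0 h1 (n := 6)]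
  have hB : (0:ℝ) < 1 + 8 * s ^ 6 := by positivity
  have hA2 : Real.sqrt (1 - s ^ 6) ^ 2 = 1 - s ^ 6 := Real.sq_sqrt hA
  have hB2 : Real.sqrt (1 + 8 * s ^ 6) ^ 2 = 1 + 8 * s ^ 6 := Real.sq_sqrt hB.le
  have hBne : Real.sqrt (1 + 8 * s ^ 6) ≠ 0 := by positivity
  unfold Y C
  field_simp
  have e1 : (2 * s * Real.sqrt (1 - s ^ 6)) ^ 6
      = 64 * s ^ 6 * (1 - s ^ 6) ^ 3 := by
    have h6 : Real.sqrt (1 - s ^ 6) ^ 6 = (1 - s ^ 6) ^ 3 := by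
      calc Real.sqrt (1 - s ^ 6) ^ 6 = (Real.sqrt (1 - s ^ 6) ^ 2) ^ 3 := by ring
      _ = (1 - s ^ 6) ^ 3 := by rw [hA2]
    rw [mul_pow, mul_pow, h6]; ring
  have e2 : Real.sqrt (1 + 8 * s ^ 6) ^ 6 = (1 + 8 * s ^ 6) ^ 3 := by
    calc Real.sqrt (1 + 8 * s ^ 6) ^ 6 = (Real.sqrt (1 + 8 * s ^ 6) ^ 2) ^ 3 := by ring
    _ = (1 + 8 * s ^ 6) ^ 3 := by rw [hB2]
  have e3 : Real.sqrt (1 - s ^ 6) ^ 6 = (1 - s ^ 6) ^ 3 := by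
    rw [show (6:ℕ) = 2 * 3 by rfl, pow_mul, hA2]
  rw [show (1:ℝ) + s ^ 6 * 8 = 1 + 8 * s ^ 6 by ring, e2, e3]
  ring

lemma Y_mem {s : ℝ} (h0 : 0 ≤ s) (h1 : s ≤ 1) : Y s ∈ Icc (0:ℝ) 1 := by
  have hY0 : 0 ≤ Y s := by
    unfold Y; positivity
  refine ⟨hY0, ?_⟩
  have h6 : (Y s) ^ 6 ≤ 1 := by
    have := one_sub_Y_pow h0 h1
    have hq : 0 ≤ (C s) ^ 2 / (1 + 8 * s ^ 6) ^ 3 := by positivity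
    linarith
  exact pow_le_one_iff_of_nonneg hY0 (by norm_num) |>.1 h6

lemma Y_hasDerivAt {x : ℝ} (h0 : 0 ≤ x) (h1 : x < 1) :
    HasDerivAt Y (2 * C x /
      (Real.sqrt (1 - x ^ 6) * Real.sqrt (1 + 8 * x ^ 6) ^ 3)) x := by
  have hx6 : x ^ 6 < 1 := pow_lt_one₀ h0 h1 (by norm_num)
  have hApos : (0:ℝ) < 1 - x ^ 6 := by linarith
  have hBpos : (0:ℝ) < 1 + 8 * x ^ 6 := by positivity
  have hA2 : Real.sqrt (1 - x ^ 6) ^ 2 = 1 - x ^ 6 := Real.sq_sqrt hApos.le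
  have hB2 : Real.sqrt (1 + 8 * x ^ 6) ^ 2 = 1 + 8 * x ^ 6 := Real.sq_sqrt hBpos.le
  have hA : (0:ℝ) < Real.sqrt (1 - x ^ 6) := Real.sqrt_pos.2 hApos
  have hB : (0:ℝ) < Real.sqrt (1 + 8 * x ^ 6) := Real.sqrt_pos.2 hBpos
  have hinner1 : HasDerivAt (fun s : ℝ => 1 - s ^ 6) (-(6 * x ^ 5)) x := by
    simpa using (hasDerivAt_pow 6 x).const_sub 1
  have hinner2 : HasDerivAt (fun s : ℝ => 1 + 8 * s ^ 6) (8 * (6 * x ^ 5)) x := by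
    simpa using ((hasDerivAt_pow 6 x).const_mul 8).const_add 1
  have hsa : HasDerivAt (fun s : ℝ => Real.sqrt (1 - s ^ 6))
      (-(6 * x ^ 5) / (2 * Real.sqrt (1 - x ^ 6))) x :=
    hinner1.sqrt (ne_of_gt hApos)
  have hsb : HasDerivAt (fun s : ℝ => Real.sqrt (1 + 8 * s ^ 6))
      (8 * (6 * x ^ 5) / (2 * Real.sqrt (1 + 8 * x ^ 6))) x :=
    hinner2.sqrt (ne_of_gt hBpos)
  have hnum : HasDerivAt (fun s : ℝ => 2 * s * Real.sqrt (1 - s ^ 6))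
      (2 * Real.sqrt (1 - x ^ 6) +
        2 * x * (-(6 * x ^ 5) / (2 * Real.sqrt (1 - x ^ 6)))) x := by
    have h2s : HasDerivAt (fun s : ℝ => 2 * s) 2 x := by
      simpa using (hasDerivAt_id x).const_mul 2
    exact h2s.mul hsa
  have hdiv := hnum.div hsb (ne_of_gt hB)
  refine hdiv.congr_deriv ?_
  symm
  have key : ((2 * Real.sqrt (1 - x ^ 6) + 2 * x * (-(6 * x ^ 5) / (2 * Real.sqrt (1 - x ^ 6)))) *
        Real.sqrt (1 + 8 * x ^ 6) - 2 * x * Real.sqrt (1 - x ^ 6) *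
        (8 * (6 * x ^ 5) / (2 * Real.sqrt (1 + 8 * x ^ 6)))) / Real.sqrt (1 + 8 * x ^ 6) ^ 2
      = ((2 * Real.sqrt (1 - x ^ 6) ^ 2 - 6 * x ^ 6) * Real.sqrt (1 + 8 * x ^ 6) ^ 2
        - 48 * x ^ 6 * Real.sqrt (1 - x ^ 6) ^ 2) /
        (Real.sqrt (1 - x ^ 6) * Real.sqrt (1 + 8 * x ^ 6) ^ 3) := by
    field_simp
    ring
  rw [key, hA2, hB2]
  unfold C
  congr 1
  ring

lemma FY_hasDerivAt {x : ℝ} (h0 : 0 ≤ x) (h1 : x < 1) (hC : C x ≠ 0) :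
    HasDerivAt (fun s => F26 (Y s))
      ((if 0 < C x then 2 else -2) * (1 - x ^ 6) ^ (-(1/2) : ℝ)) x := by
  have hx6 : x ^ 6 < 1 := pow_lt_one₀ h0 h1 (by norm_num)
  have hApos : (0:ℝ) < 1 - x ^ 6 := by linarith
  have hBpos : (0:ℝ) < 1 + 8 * x ^ 6 := by positivity
  have hA : (0:ℝ) < Real.sqrt (1 - x ^ 6) := Real.sqrt_pos.2 hApos
  have hB : (0:ℝ) < Real.sqrt (1 + 8 * x ^ 6) := Real.sqrt_pos.2 hBpos
  have hA2 : Real.sqrt (1 - x ^ 6) ^ 2 = 1 - x ^ 6 := Real.sq_sqrt hApos.le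
  have hB2 : Real.sqrt (1 + 8 * x ^ 6) ^ 2 = 1 + 8 * x ^ 6 := Real.sq_sqrt hBpos.le
  have hYmem := Y_mem h0 h1.le
  have hYid := one_sub_Y_pow h0 h1.le
  have hY1 : Y x < 1 := by
    by_contra h
    push_neg at h
    have : Y x = 1 := le_antisymm hYmem.2 h
    rw [this] at hYid
    simp at hYid
    have : (C x) ^ 2 / (1 + 8 * x ^ 6) ^ 3 = 0 := by linarith
    have := (div_eq_zero_iff.1 this).resolve_right (by positivity)
    exact hC (pow_eq_zero_iff (by norm_num) |>.1 this)
  have hF := F26_hasDerivAt hYmem.1 hY1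
  have hYd := Y_hasDerivAt h0 h1
  have hcomp : HasDerivAt (fun s => F26 (Y s))
      ((1 - (Y x) ^ 6) ^ (-(1/2) : ℝ) *
        (2 * C x / (Real.sqrt (1 - x ^ 6) * Real.sqrt (1 + 8 * x ^ 6) ^ 3))) x :=
    HasDerivAt.comp x hF hYd
  convert hcomp using 1
  have hsq : Real.sqrt ((C x) ^ 2 / (1 + 8 * x ^ 6) ^ 3)
      = |C x| / Real.sqrt (1 + 8 * x ^ 6) ^ 3 := by
    rw [show (C x) ^ 2 / (1 + 8 * x ^ 6) ^ 3
        = (|C x| / Real.sqrt (1 + 8 * x ^ 6) ^ 3) ^ 2 by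
      rw [div_pow, sq_abs, show (Real.sqrt (1 + 8 * x ^ 6) ^ 3) ^ 2
        = (Real.sqrt (1 + 8 * x ^ 6) ^ 2) ^ 3 by ring, hB2]]
    exact Real.sqrt_sq (by positivity)
  rw [hYid, rpow_neg_half ((C x) ^ 2 / (1 + 8 * x ^ 6) ^ 3) (by positivity), hsq]
  rcases lt_or_gt_of_ne hC with hneg | hpos
  · rw [if_neg (by linarith), abs_of_neg hneg, rpow_neg_half _ hApos.le]
    field_simp
  · rw [if_pos hpos, abs_of_pos hpos, rpow_neg_half _ hApos.le]
    field_simp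

lemma Y_continuous : Continuous Y := by
  apply Continuous.div
  · exact (continuous_const.mul continuous_id).mul
      (Real.continuous_sqrt.comp (continuous_const.sub (continuous_pow 6)))
  · exact Real.continuous_sqrt.comp (continuous_const.add (continuous_const.mul (continuous_pow 6)))
  · intro s
    have : (0:ℝ) < 1 + 8 * s ^ 6 := by positivity
    positivity

lemma FY_cont {a b : ℝ} (h0 : 0 ≤ a) (h1 : b ≤ 1) :
    ContinuousOn (fun s => F26 (Y s)) (Icc a b) := by
  apply F26_cont.comp Y_continuous.continuousOn
  intro s hs
  exact Y_mem (le_trans h0 hs.1) (le_trans hs.2 h1)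

lemma F26_zero : F26 0 = 0 := by
  rw [F26_eq, intervalIntegral.integral_same]

lemma Y_zero : Y 0 = 0 := by unfold Y; simp

lemma Y_one : Y 1 = 0 := by unfold Y; norm_num

/-- Case (a): if `C s ≥ 0` then `F26 (Y s) = 2 * F26 s`. -/
lemma case_a {s : ℝ} (h0 : 0 ≤ s) (h1 : s ≤ 1) (hC : 0 ≤ C s) :
    F26 (Y s) = 2 * F26 s := by
  have hs1 : s < 1 := by
    rcases lt_or_eq_of_le h1 with h | h
    · exact h
    · exfalso; rw [h] at hC; unfold C at hC; norm_num at hC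
  have key : ∀ y ∈ Icc (0:ℝ) s, F26 (Y y) = 2 * F26 y := by
    apply eq_of_has_deriv_right_eq
      (f' := fun x => 2 * (1 - x ^ 6) ^ (-(1/2) : ℝ))
    · intro x hx
      have hxC : 0 < C x := by
        rcases lt_or_eq_of_le hx.1 with hx0 | hx0
        · exact lt_of_le_of_lt hC (C_anti hx.1 hx.2)
        · calc (0:ℝ) ≤ C s := hC
          _ < C x := C_anti hx.1 hx.2
      have := FY_hasDerivAt hx.1 (lt_of_lt_of_le hx.2 h1) (ne_of_gt hxC)
      rw [if_pos hxC] at this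
      exact this.hasDerivWithinAt
    · intro x hx
      exact ((F26_hasDerivAt hx.1 (lt_of_lt_of_le hx.2 h1)).const_mul 2).hasDerivWithinAt
    · exact FY_cont le_rfl h1
    · exact continuousOn_const.mul (F26_cont.mono (Icc_subset_Icc le_rfl h1))
    · rw [Y_zero, F26_zero]; ring
  exact key s ⟨h0, le_rfl⟩

/-- Case (b): if `C s < 0` then `F26 (Y s) = 2 * F26 1 - 2 * F26 s`. -/
lemma case_b {s : ℝ} (h0 : 0 ≤ s) (h1 : s ≤ 1) (hC : C s < 0) :
    F26 (Y s) = 2 * F26 1 - 2 * F26 s := by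
  -- consider h x = F26 (Y x) + 2 * F26 x on [s, 1]; h' = 0; h 1 = 2 F26 1
  have key : ∀ y ∈ Icc s 1, F26 (Y y) + 2 * F26 y = F26 (Y s) + 2 * F26 s := by
    apply eq_of_has_deriv_right_eq (f' := fun _ => (0:ℝ))
    · intro x hx
      have hxC : C x < 0 := by
        rcases lt_or_eq_of_le hx.1 with hsx | hsx
        · exact lt_trans (C_anti h0 hsx) hC
        · rw [← hsx]; exact hC
      have hd1 := FY_hasDerivAt (le_trans h0 hx.1) hx.2 (ne_of_lt hxC)
      rw [if_neg (by linarith)] at hd1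
      have hd2 := (F26_hasDerivAt (le_trans h0 hx.1) hx.2).const_mul 2
      have := hd1.add hd2
      have h0' : -2 * (1 - x ^ 6) ^ (-(1/2):ℝ) + 2 * (1 - x ^ 6) ^ (-(1/2):ℝ) = 0 := by ring
      rw [h0'] at this
      exact this.hasDerivWithinAt
    · intro x _
      exact (hasDerivAt_const x _).hasDerivWithinAt
    · exact (FY_cont h0 le_rfl).add
        (continuousOn_const.mul (F26_cont.mono (Icc_subset_Icc h0 le_rfl)))
    · exact continuousOn_const
    · rfl
  have h1' := key 1 ⟨h1, le_rfl⟩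
  rw [Y_one, F26_zero] at h1'
  linarith

end Shino

/-- Shinohara's double-angle formula for `sin_{2,6}`. -/
theorem double_angle_sin_two_six (s : ℝ) (hs : s ∈ Set.Icc (0:ℝ) 1) :
    (2 * s * Real.sqrt (1 - s ^ 6) / Real.sqrt (1 + 8 * s ^ 6)) ∈ Set.Icc (0:ℝ) 1 ∧
    (2 * F26 s ≤ F26 1 →
      F26 (2 * s * Real.sqrt (1 - s ^ 6) / Real.sqrt (1 + 8 * s ^ 6)) = 2 * F26 s) ∧
    (F26 1 ≤ 2 * F26 s →
      F26 (2 * s * Real.sqrt (1 - s ^ 6) / Real.sqrt (1 + 8 * s ^ 6))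
        = 2 * F26 1 - 2 * F26 s) := by
  obtain ⟨h0, h1⟩ := hs
  have hYdef : 2 * s * Real.sqrt (1 - s ^ 6) / Real.sqrt (1 + 8 * s ^ 6) = Shino.Y s := rfl
  have hYmem := Shino.Y_mem h0 h1
  have hFYle : F26 (Shino.Y s) ≤ F26 1 := Shino.F26_mono hYmem.1 hYmem.2 le_rfl
  refine ⟨by rw [hYdef]; exact hYmem, ?_, ?_⟩
  · intro hle
    rw [hYdef]
    rcases le_or_gt 0 (Shino.C s) with hC | hC
    · exact Shino.case_a h0 h1 hC
    · have hb := Shino.case_b h0 h1 hC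
      have : F26 1 ≤ 2 * F26 s := by linarith [hFYle, hb]
      have heq : 2 * F26 s = F26 1 := le_antisymm hle this
      rw [hb, heq]; ring
  · intro hge
    rw [hYdef]
    rcases le_or_gt 0 (Shino.C s) with hC | hC
    · have ha := Shino.case_a h0 h1 hC
      have h2 : 2 * F26 s ≤ F26 1 := by rw [← ha]; exact hFYle
      have heq : 2 * F26 s = F26 1 := le_antisymm h2 hge
      rw [ha, heq]; ring
    · exact Shino.case_b h0 h1 hC
end

section
/- Let G(x) := ∫₀ˣ (1−t⁶)^{−5/6} dt for x ∈ [0,1]. For every s ∈ [0,1] with 2G(s) ≤ G(1), set A := 1 + 32 s⁶ (1−s⁶), and y := 2^{1/6} · s · (1−s⁶)^{1/6} · (3 + √A)^{1/2} / ( A^{1/4} · (1 + √A)^{1/6} ). Then y ∈ [0,1] and G(y) = 2 G(s). (This is the double-angle formula for sin_{6/5,6}: for x ∈ [0, π_{6/5,6}/4], sin_{6/5,6}(2x) = 2^{1/6} sin_{6/5,6}x cos_{6/5,6}^{1/5}x (3+√(1+32 sin⁶ cos^{6/5}))^{1/2} / ((1+32 sin⁶ cos^{6/5})^{1/4} (1+√(1+32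 sin⁶ cos^{6/5}))^{1/6}), since cos_{6/5,6}x = (1−sin_{6/5,6}⁶x)^{5/6}.) -/
/-- `G = F_{6/5,6}`, the incomplete integral `∫₀ˣ (1−t⁶)^{−5/6} dt`. -/
noncomputable def G656 (x : ℝ) : ℝ := ∫ t in (0:ℝ)..x, (1 - t ^ 6) ^ (-(5/6) : ℝ)

open Set MeasureTheory intervalIntegral Filter

set_option linter.unusedSectionVars false

noncomputable def f656 (t : ℝ) : ℝ := (1 - t ^ 6) ^ (-(5/6) : ℝ)

lemma f656_meas : Measurable f656 := by
  unfold f656; fun_prop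

lemma f656_nonneg {t : ℝ} (ht : t ∈ Set.Icc (0:ℝ) 1) : 0 ≤ f656 t := by
  have : (0:ℝ) ≤ 1 - t ^ 6 := by nlinarith [ht.1, ht.2, pow_le_one₀ ht.1 ht.2 (n := 6)]
  exact Real.rpow_nonneg this _

lemma f656_pos {t : ℝ} (ht : t ∈ Set.Ico (0:ℝ) 1) : 0 < f656 t := by
  have : (0:ℝ) < 1 - t ^ 6 := by nlinarith [ht.1, ht.2, pow_lt_one₀ ht.1 ht.2 (by norm_num : (6:ℕ) ≠ 0)]
  exact Real.rpow_pos_of_pos this _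

lemma f656_contAt {t : ℝ} (ht : 1 - t ^ 6 ≠ 0) : ContinuousAt f656 t := by
  unfold f656
  exact ContinuousAt.rpow_const (by fun_prop) (Or.inl ht)

lemma f656_int : IntervalIntegrable f656 volume 0 1 := by
  have hg : IntervalIntegrable (fun t : ℝ => (1 - t) ^ (-(5/6) : ℝ)) volume 0 1 := by
    have h := (intervalIntegral.intervalIntegrable_rpow' (a := 0) (b := 1)
      (r := (-(5/6) : ℝ)) (by norm_num)).comp_sub_left 1
    have h2 := h.symm
    simpa using h2
  refine hg.mono_fun' (f656_meas.aestronglyMeasurable.restrict) ?_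
  filter_upwards [MeasureTheory.ae_restrict_mem measurableSet_uIoc] with t ht
  rw [Set.uIoc_of_le (by norm_num : (0:ℝ) ≤ 1)] at ht
  obtain ⟨ht0, ht1⟩ := ht
  have h1 : (0:ℝ) ≤ 1 - t := by linarith
  have h2 : 1 - t ≤ 1 - t ^ 6 := by nlinarith [pow_le_one₀ ht0.le ht1 (n := 5), pow_nonneg ht0.le 5]
  have hf : f656 t ≤ (1 - t) ^ (-(5/6) : ℝ) := by
    rcases eq_or_lt_of_le h1 with h | h
    · have ht : t = 1 := by linarith
      subst ht
      unfold f656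
      norm_num
    · exact Real.rpow_le_rpow_of_nonpos h h2 (by norm_num)
  rw [Real.norm_eq_abs, abs_of_nonneg (f656_nonneg ⟨ht0.le, ht1⟩)]
  exact hf

lemma f656_int' {a b : ℝ} (ha : a ∈ Set.Icc (0:ℝ) 1) (hb : b ∈ Set.Icc (0:ℝ) 1) :
    IntervalIntegrable f656 volume a b := by
  apply f656_int.mono_set'
  rw [Set.uIoc_of_le (by norm_num : (0:ℝ) ≤ 1)]
  intro x hx
  rcases Set.mem_uIoc.1 hx with ⟨h1, h2⟩ | ⟨h1, h2⟩
  · exact ⟨lt_of_le_of_lt ha.1 h1, le_trans h2 hb.2⟩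
  · exact ⟨lt_of_le_of_lt hb.1 h1, le_trans h2 ha.2⟩

lemma G656_hasDerivAt {x : ℝ} (hx : x ∈ Set.Ico (0:ℝ) 1) : HasDerivAt G656 (f656 x) x := by
  have hne : 1 - x ^ 6 ≠ 0 := by
    have : x ^ 6 < 1 := pow_lt_one₀ hx.1 hx.2 (by norm_num)
    linarith
  exact intervalIntegral.integral_hasDerivAt_right (f656_int' ⟨le_refl 0, by norm_num⟩ ⟨hx.1, hx.2.le⟩)
    ⟨Set.univ, Filter.univ_mem, f656_meas.aestronglyMeasurable.restrict⟩ (f656_contAt hne)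

lemma G656_contOn : ContinuousOn G656 (Set.Icc (0:ℝ) 1) := by
  have := intervalIntegral.continuousOn_primitive_interval' (μ := volume) (b₁ := (0:ℝ)) (b₂ := 1)
    f656_int (by rw [Set.uIcc_of_le (by norm_num : (0:ℝ) ≤ 1)]; exact ⟨le_refl 0, by norm_num⟩)
  rw [Set.uIcc_of_le (by norm_num : (0:ℝ) ≤ 1)] at this
  exact this

lemma G656_zero : G656 0 = 0 := intervalIntegral.integral_same

lemma G656_strictMono {a b : ℝ} (ha : a ∈ Set.Icc (0:ℝ) 1) (hb : b ∈ Set.Icc (0:ℝ) 1)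
    (hab : a < b) : G656 a < G656 b := by
  have hadd := intervalIntegral.integral_add_adjacent_intervals
    (f656_int' ⟨le_refl 0, by norm_num⟩ ha) (f656_int' ha hb)
  have hpos : 0 < ∫ x in a..b, f656 x := by
    apply intervalIntegral.intervalIntegral_pos_of_pos_on (f656_int' ha hb) _ hab
    intro x hx
    exact f656_pos ⟨le_trans ha.1 hx.1.le, lt_of_lt_of_le hx.2 hb.2⟩
  have : G656 b = G656 a + ∫ x in a..b, f656 x := by
    show (∫ t in (0:ℝ)..b, f656 t) = (∫ t in (0:ℝ)..a, f656 t) + ∫ x in a..b, f656 x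
    rw [← hadd]
  linarith


noncomputable def y656 (s : ℝ) : ℝ :=
  2 ^ ((1:ℝ)/6) * s * (1 - s ^ 6) ^ ((1:ℝ)/6)
        * Real.sqrt (3 + Real.sqrt (1 + 32 * s ^ 6 * (1 - s ^ 6)))
        / ((1 + 32 * s ^ 6 * (1 - s ^ 6)) ^ ((1:ℝ)/4)
          * (1 + Real.sqrt (1 + 32 * s ^ 6 * (1 - s ^ 6))) ^ ((1:ℝ)/6))

noncomputable def r656 (s : ℝ) : ℝ := Real.sqrt (1 + 32 * s ^ 6 * (1 - s ^ 6))

lemma rpow_nat_helper (x : ℝ) (hx : 0 ≤ x) (a : ℝ) (n : ℕ) :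
    (x ^ a) ^ n = x ^ (a * n) := by
  rw [← Real.rpow_natCast (x ^ a) n, ← Real.rpow_mul hx]

section props
variable {s : ℝ} (hs : s ∈ Set.Icc (0:ℝ) 1)
include hs

lemma c656_nonneg : (0:ℝ) ≤ 1 - s ^ 6 := by
  nlinarith [pow_le_one₀ hs.1 hs.2 (n := 6)]

lemma A656_ge_one : (1:ℝ) ≤ 1 + 32 * s ^ 6 * (1 - s ^ 6) := by
  have h1 := c656_nonneg hs
  nlinarith [pow_nonneg hs.1 6]

lemma A656_le_nine : 1 + 32 * s ^ 6 * (1 - s ^ 6) ≤ 9 := by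
  nlinarith [sq_nonneg (1 - 2 * s ^ 6)]

lemma r656_ge_one : (1:ℝ) ≤ r656 s := by
  have := A656_ge_one hs
  rw [show (1:ℝ) = Real.sqrt 1 by simp]
  exact Real.sqrt_le_sqrt this

lemma r656_le_three : r656 s ≤ 3 := by
  rw [show (3:ℝ) = Real.sqrt 9 by rw [show (9:ℝ) = 3 ^ 2 by norm_num, Real.sqrt_sq (by norm_num)]]
  exact Real.sqrt_le_sqrt (A656_le_nine hs)

lemma r656_sq : r656 s ^ 2 = 1 + 32 * s ^ 6 * (1 - s ^ 6) := by
  have h := A656_ge_one hs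
  exact Real.sq_sqrt (by linarith)

lemma y656_nonneg : 0 ≤ y656 s := by
  have h1 := hs.1
  have hc := c656_nonneg hs
  unfold y656
  apply div_nonneg
  · apply mul_nonneg
    apply mul_nonneg
    apply mul_nonneg
    · positivity
    · exact h1
    · exact Real.rpow_nonneg hc _
    · exact Real.sqrt_nonneg _
  · positivity

lemma y656_pow6 : (y656 s) ^ 6
    = (r656 s - 1) * (r656 s + 3) ^ 3 / (16 * r656 s ^ 3) := by
  have hc := c656_nonneg hs
  have hA1 := A656_ge_one hs
  have hA0 : (0:ℝ) ≤ 1 + 32 * s ^ 6 * (1 - s ^ 6) := by linarith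
  have hr1 := r656_ge_one hs
  have hr0 : (0:ℝ) < r656 s := by linarith
  have hr2 := r656_sq hs
  have h3r : (0:ℝ) ≤ 3 + r656 s := by linarith
  have h1r : (0:ℝ) ≤ 1 + r656 s := by linarith
  have e1 : ((2:ℝ) ^ ((1:ℝ)/6)) ^ (6:ℕ) = 2 := by
    rw [rpow_nat_helper 2 (by norm_num) _ 6]; norm_num
  have e2 : (((1:ℝ) - s ^ 6) ^ ((1:ℝ)/6)) ^ (6:ℕ) = 1 - s ^ 6 := by
    rw [rpow_nat_helper _ hc _ 6]; norm_num
  have e3 : (Real.sqrt (3 + r656 s)) ^ (6:ℕ) = (3 + r656 s) ^ 3 := by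
    rw [show (6:ℕ) = 2 * 3 by norm_num, pow_mul, Real.sq_sqrt h3r]
  have e4 : (((1:ℝ) + 32 * s ^ 6 * (1 - s ^ 6)) ^ ((1:ℝ)/4)) ^ (6:ℕ) = r656 s ^ 3 := by
    rw [rpow_nat_helper _ hA0 _ 6]
    rw [show ((1:ℝ)/4 * (6:ℕ)) = (1/2) * (3:ℕ) by push_cast; norm_num]
    rw [Real.rpow_mul hA0, Real.rpow_natCast]
    rw [← Real.sqrt_eq_rpow]
    rfl
  have e5 : (((1:ℝ) + r656 s) ^ ((1:ℝ)/6)) ^ (6:ℕ) = 1 + r656 s := by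
    rw [rpow_nat_helper _ (by linarith) _ 6]
    norm_num
  have hy6 : (y656 s) ^ 6 = 2 * s ^ 6 * (1 - s ^ 6) * (3 + r656 s) ^ 3
      / (r656 s ^ 3 * (1 + r656 s)) := by
    unfold y656
    have hrr : Real.sqrt (1 + 32 * s ^ 6 * (1 - s ^ 6)) = r656 s := rfl
    rw [hrr, div_pow, mul_pow, mul_pow, mul_pow, mul_pow, e1, e2, e3, e4, e5]
  rw [hy6]
  rw [div_eq_div_iff (by positivity) (by positivity)]
  linear_combination (-(r656 s + 3) ^ 3 * r656 s ^ 3) * hr2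

lemma y656_one_sub_pow6 : 1 - (y656 s) ^ 6
    = (3 - r656 s) ^ 3 * (1 + r656 s) / (16 * r656 s ^ 3) := by
  have hr1 := r656_ge_one hs
  have hr0 : r656 s ≠ 0 := by linarith
  rw [y656_pow6 hs]
  field_simp
  ring

lemma y656_le_one : y656 s ≤ 1 := by
  have hr1 := r656_ge_one hs
  have hr3 := r656_le_three hs
  have h6 : (y656 s) ^ 6 ≤ 1 := by
    have hq : 0 ≤ (3 - r656 s) ^ 3 * (1 + r656 s) / (16 * r656 s ^ 3) := by
      apply div_nonneg
      · exact mul_nonneg (pow_nonneg (by linarith) 3) (by linarith)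
      · positivity
    have := y656_one_sub_pow6 hs
    linarith
  exact (pow_le_one_iff_of_nonneg (y656_nonneg hs) (by norm_num)).1 h6

end props


noncomputable def sstar : ℝ := (1/2 : ℝ) ^ ((1:ℝ)/6)

lemma rpow_nat_helper' (x : ℝ) (hx : 0 ≤ x) (a : ℝ) (n : ℕ) :
    (x ^ a) ^ n = x ^ (a * n) := by
  rw [← Real.rpow_natCast (x ^ a) n, ← Real.rpow_mul hx]

lemma sstar_pow6 : sstar ^ 6 = 1/2 := by
  unfold sstar
  rw [rpow_nat_helper' _ (by norm_num) _ 6]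
  norm_num

lemma sstar_pos : 0 < sstar := Real.rpow_pos_of_pos (by norm_num) _

lemma sstar_lt_one : sstar < 1 := Real.rpow_lt_one (by norm_num) (by norm_num) (by norm_num)

lemma y656_zero : y656 0 = 0 := by
  unfold y656
  norm_num

lemma y656_contAt {s : ℝ} (hs : s ∈ Set.Icc (0:ℝ) 1) : ContinuousAt y656 s := by
  have hA1 : (1:ℝ) ≤ 1 + 32 * s ^ 6 * (1 - s ^ 6) := by
    nlinarith [pow_le_one₀ hs.1 hs.2 (n := 6), pow_nonneg hs.1 6]
  have hA : ContinuousAt (fun s : ℝ => 1 + 32 * s ^ 6 * (1 - s ^ 6)) s := by fun_prop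
  have hsq : ContinuousAt (fun s : ℝ => Real.sqrt (1 + 32 * s ^ 6 * (1 - s ^ 6))) s :=
    Real.continuous_sqrt.continuousAt.comp hA
  have hsq1 : (1:ℝ) ≤ Real.sqrt (1 + 32 * s ^ 6 * (1 - s ^ 6)) := by
    have h := Real.sqrt_le_sqrt hA1
    simpa using h
  unfold y656
  apply ContinuousAt.div
  · apply ContinuousAt.mul
    apply ContinuousAt.mul
    apply ContinuousAt.mul
    · fun_prop
    · fun_prop
    · exact ContinuousAt.rpow_const (by fun_prop) (Or.inr (by norm_num))
    · exact Real.continuous_sqrt.continuousAt.comp (by fun_prop)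
  · apply ContinuousAt.mul
    · exact ContinuousAt.rpow_const hA (Or.inl (by linarith))
    · exact ContinuousAt.rpow_const (by fun_prop) (Or.inl (by linarith))
  · have h1 : (0:ℝ) < (1 + 32 * s ^ 6 * (1 - s ^ 6)) ^ ((1:ℝ)/4) :=
      Real.rpow_pos_of_pos (by linarith) _
    have h2 : (0:ℝ) < (1 + Real.sqrt (1 + 32 * s ^ 6 * (1 - s ^ 6))) ^ ((1:ℝ)/6) :=
      Real.rpow_pos_of_pos (by linarith) _
    positivity

lemma sixthroot_eq {a b : ℝ} (ha : 0 ≤ a) (h : a ^ (6:ℕ) = b) : a = b ^ ((1:ℝ)/6) := by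
  rw [← h, ← Real.rpow_natCast a 6, ← Real.rpow_mul ha]
  norm_num

lemma pow6_rpow_neg56 (x : ℝ) (hx : 0 ≤ x) : (x ^ (6:ℕ)) ^ (-(5/6):ℝ) = (x ^ (5:ℕ))⁻¹ := by
  rw [← Real.rpow_natCast x 6, ← Real.rpow_mul hx]
  rw [show ((6:ℕ):ℝ) * (-(5/6)) = -((5:ℕ):ℝ) by push_cast; norm_num]
  rw [Real.rpow_neg hx, Real.rpow_natCast]

lemma Phi656_hasDerivAt {x : ℝ} (hx : x ∈ Set.Ioo 0 sstar) :
    HasDerivAt (fun t => G656 (y656 t) - 2 * G656 t) 0 x := by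
  obtain ⟨hx0, hxs⟩ := hx
  have hx1 : x < 1 := lt_trans hxs sstar_lt_one
  have hxI : x ∈ Set.Icc (0:ℝ) 1 := ⟨hx0.le, hx1.le⟩
  have hu2 : x ^ 6 < 1/2 := by
    have h := pow_lt_pow_left₀ hxs hx0.le (n := 6) (by norm_num)
    rwa [sstar_pow6] at h
  have hc : (0:ℝ) < 1 - x ^ 6 := by linarith
  have hw : (0:ℝ) < 1 - 2 * x ^ 6 := by linarith
  have hu0 : (0:ℝ) < x ^ 6 := pow_pos hx0 6
  have hA1 : (1:ℝ) < 1 + 32 * x ^ 6 * (1 - x ^ 6) := by nlinarith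
  have hA9 : 1 + 32 * x ^ 6 * (1 - x ^ 6) < 9 := by nlinarith [mul_pos hw hw]
  have hr2 : r656 x ^ 2 = 1 + 32 * x ^ 6 * (1 - x ^ 6) := r656_sq hxI
  have hRge := r656_ge_one hxI
  have hR1 : 1 < r656 x := by nlinarith
  have hR3 : r656 x < 3 := by nlinarith
  have hR0 : (0:ℝ) < r656 x := by linarith
  -- derivative of the inner polynomial A
  have hp6 : HasDerivAt (fun t : ℝ => t ^ 6) (6 * x ^ 5) x := by
    simpa using hasDerivAt_pow 6 x
  have hAd : HasDerivAt (fun t : ℝ => 1 + 32 * t ^ 6 * (1 - t ^ 6))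
      (192 * x ^ 5 - 384 * x ^ 11) x := by
    have h1 : HasDerivAt (fun t : ℝ => 32 * t ^ 6) (32 * (6 * x ^ 5)) x := hp6.const_mul 32
    have h2 : HasDerivAt (fun t : ℝ => 1 - t ^ 6) (-(6 * x ^ 5)) x := hp6.const_sub 1
    have h3 := (h1.mul h2).const_add 1
    refine h3.congr_deriv ?_
    ring
  have hAne : (1 + 32 * x ^ 6 * (1 - x ^ 6)) ≠ 0 := by
    intro hcon
    rw [hcon] at hA1
    norm_num at hA1
  have hrd : HasDerivAt r656 ((192 * x ^ 5 - 384 * x ^ 11) / (2 * r656 x)) x := hAd.sqrt hAne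
  -- derivative of P at r656 x
  have hNd : HasDerivAt (fun z : ℝ => (z - 1) * (z + 3) ^ 3)
      ((r656 x + 3) ^ 3 + (r656 x - 1) * (3 * (r656 x + 3) ^ 2)) (r656 x) := by
    have h1 : HasDerivAt (fun z : ℝ => z - 1) 1 (r656 x) := (hasDerivAt_id (r656 x)).sub_const 1
    have h2 : HasDerivAt (fun z : ℝ => (z + 3) ^ 3) (3 * (r656 x + 3) ^ 2) (r656 x) := by
      have h := ((hasDerivAt_id (r656 x)).add_const 3).pow 3
      simp only [id_eq] at h
      refine h.congr_deriv ?_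
      push_cast
      ring
    have h3 := h1.mul h2
    refine h3.congr_deriv ?_
    ring
  have hDd : HasDerivAt (fun z : ℝ => 16 * z ^ 3) (48 * r656 x ^ 2) (r656 x) := by
    have h := (hasDerivAt_pow 3 (r656 x)).const_mul 16
    refine h.congr_deriv ?_
    push_cast
    ring
  have hDne : 16 * r656 x ^ 3 ≠ 0 := by positivity
  have hPd : HasDerivAt (fun z : ℝ => (z - 1) * (z + 3) ^ 3 / (16 * z ^ 3))
      ((9 - r656 x ^ 2) ^ 2 / (16 * r656 x ^ 4)) (r656 x) := by
    have h := hNd.div hDd hDne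
    refine h.congr_deriv ?_
    field_simp
    ring
  have hPR : 0 < (r656 x - 1) * (r656 x + 3) ^ 3 / (16 * r656 x ^ 3) := by
    apply div_pos
    · exact mul_pos (by linarith) (by positivity)
    · positivity
  have hQR : 0 < (3 - r656 x) ^ 3 * (1 + r656 x) / (16 * r656 x ^ 3) := by
    apply div_pos
    · exact mul_pos (pow_pos (by linarith) 3) (by linarith)
    · positivity
  have hψd : HasDerivAt (fun z : ℝ => ((z - 1) * (z + 3) ^ 3 / (16 * z ^ 3)) ^ ((1:ℝ)/6))
      ((9 - r656 x ^ 2) ^ 2 / (16 * r656 x ^ 4) * ((1:ℝ)/6)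
        * ((r656 x - 1) * (r656 x + 3) ^ 3 / (16 * r656 x ^ 3)) ^ ((1:ℝ)/6 - 1)) (r656 x) :=
    hPd.rpow_const (Or.inl (ne_of_gt hPR))
  have hcomp := hψd.comp x hrd
  have heq : y656 =ᶠ[nhds x]
      fun t => ((r656 t - 1) * (r656 t + 3) ^ 3 / (16 * r656 t ^ 3)) ^ ((1:ℝ)/6) := by
    filter_upwards [isOpen_Ioo.mem_nhds (⟨hx0, hxs⟩ : x ∈ Set.Ioo 0 sstar)] with t ht
    have htI : t ∈ Set.Icc (0:ℝ) 1 := ⟨ht.1.le, (lt_trans ht.2 sstar_lt_one).le⟩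
    exact sixthroot_eq (y656_nonneg htI) (y656_pow6 htI)
  have hyd : HasDerivAt y656
      ((9 - r656 x ^ 2) ^ 2 / (16 * r656 x ^ 4) * ((1:ℝ)/6)
        * ((r656 x - 1) * (r656 x + 3) ^ 3 / (16 * r656 x ^ 3)) ^ ((1:ℝ)/6 - 1)
        * ((192 * x ^ 5 - 384 * x ^ 11) / (2 * r656 x))) x :=
    (Filter.EventuallyEq.hasDerivAt_iff heq).2 hcomp
  have hy0 : 0 ≤ y656 x := y656_nonneg hxI
  have hy6 : (y656 x) ^ 6 = (r656 x - 1) * (r656 x + 3) ^ 3 / (16 * r656 x ^ 3) := y656_pow6 hxI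
  have hy6' : 1 - (y656 x) ^ 6 = (3 - r656 x) ^ 3 * (1 + r656 x) / (16 * r656 x ^ 3) :=
    y656_one_sub_pow6 hxI
  have hy1 : y656 x < 1 := by
    have h6 : (y656 x) ^ 6 < 1 := by linarith [hQR, hy6']
    by_contra hcon
    push_neg at hcon
    have : (1:ℝ) ≤ (y656 x) ^ 6 := one_le_pow₀ hcon
    linarith
  have hGy := G656_hasDerivAt ⟨hy0, hy1⟩
  have hGx := G656_hasDerivAt ⟨hx0.le, hx1⟩
  have hchain := hGy.comp x hyd
  have hfull := hchain.sub (hGx.const_mul 2)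
  -- the value identity
  have hval : f656 (y656 x)
      * ((9 - r656 x ^ 2) ^ 2 / (16 * r656 x ^ 4) * ((1:ℝ)/6)
        * ((r656 x - 1) * (r656 x + 3) ^ 3 / (16 * r656 x ^ 3)) ^ ((1:ℝ)/6 - 1)
        * ((192 * x ^ 5 - 384 * x ^ 11) / (2 * r656 x)))
      - 2 * f656 x = 0 := by
    have hfy : f656 (y656 x)
        = ((3 - r656 x) ^ 3 * (1 + r656 x) / (16 * r656 x ^ 3)) ^ (-(5/6):ℝ) := by
      show (1 - (y656 x) ^ 6) ^ (-(5/6):ℝ) = _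
      rw [hy6']
    have hexp : (1:ℝ)/6 - 1 = -(5/6 : ℝ) := by norm_num
    rw [hfy, hexp, sub_eq_zero]
    have key : ((3 - r656 x) ^ 3 * (1 + r656 x) / (16 * r656 x ^ 3)) ^ (-(5/6):ℝ)
        * (((r656 x - 1) * (r656 x + 3) ^ 3 / (16 * r656 x ^ 3)) ^ (-(5/6):ℝ))
        = (32:ℝ)⁻¹ * (x ^ 5)⁻¹ * ((1 - 2 * x ^ 6) ^ 5)⁻¹ * r656 x ^ 5 * f656 x := by
      rw [← Real.mul_rpow hQR.le hPR.le]
      have hbase : (3 - r656 x) ^ 3 * (1 + r656 x) / (16 * r656 x ^ 3)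
          * ((r656 x - 1) * (r656 x + 3) ^ 3 / (16 * r656 x ^ 3))
          = 64 * x ^ 6 * (1 - 2 * x ^ 6) ^ 6 * (1 - x ^ 6) / r656 x ^ 6 := by
        rw [div_mul_div_comm, div_eq_div_iff (by positivity) (by positivity)]
        linear_combination ((-1) * r656 x ^12 + (32) * r656 x ^10 * x^12 - (32) * r656 x ^10 * x^6
          + (27) * r656 x ^10 - (1024) * r656 x ^8 * x^24 + (2048) * r656 x ^8 * x^18
          - (1856) * r656 x ^8 * x^12 + (832) * r656 x ^8 * x^6 - (243) * r656 x ^8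
          + (32768) * r656 x ^6 * x^36 - (98304) * r656 x ^6 * x^30 + (123904) * r656 x ^6 * x^24
          - (83968) * r656 x ^6 * x^18 + (32544) * r656 x ^6 * x^12 - (6944) * r656 x ^6 * x^6
          + (729) * r656 x ^6) * hr2
      rw [hbase]
      rw [Real.div_rpow (by positivity) (by positivity)]
      rw [Real.mul_rpow (by positivity) hc.le]
      rw [Real.mul_rpow (by positivity) (by positivity)]
      rw [Real.mul_rpow (by norm_num) (by positivity)]
      rw [show (64:ℝ) = 2 ^ (6:ℕ) by norm_num]
      rw [pow6_rpow_neg56 2 (by norm_num), pow6_rpow_neg56 x hx0.le,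
          pow6_rpow_neg56 (1 - 2 * x ^ 6) hw.le, pow6_rpow_neg56 (r656 x) hR0.le]
      show _ = _
      have hfx : f656 x = (1 - x ^ 6) ^ (-(5/6):ℝ) := rfl
      rw [hfx]
      field_simp
      ring
    calc ((3 - r656 x) ^ 3 * (1 + r656 x) / (16 * r656 x ^ 3)) ^ (-(5/6):ℝ)
        * ((9 - r656 x ^ 2) ^ 2 / (16 * r656 x ^ 4) * ((1:ℝ)/6)
          * ((r656 x - 1) * (r656 x + 3) ^ 3 / (16 * r656 x ^ 3)) ^ (-(5/6):ℝ)
          * ((192 * x ^ 5 - 384 * x ^ 11) / (2 * r656 x)))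
        = (((3 - r656 x) ^ 3 * (1 + r656 x) / (16 * r656 x ^ 3)) ^ (-(5/6):ℝ)
          * (((r656 x - 1) * (r656 x + 3) ^ 3 / (16 * r656 x ^ 3)) ^ (-(5/6):ℝ)))
          * ((9 - r656 x ^ 2) ^ 2 / (16 * r656 x ^ 4) * ((1:ℝ)/6)
          * ((192 * x ^ 5 - 384 * x ^ 11) / (2 * r656 x))) := by ring
      _ = ((32:ℝ)⁻¹ * (x ^ 5)⁻¹ * ((1 - 2 * x ^ 6) ^ 5)⁻¹ * r656 x ^ 5 * f656 x)
          * ((9 - r656 x ^ 2) ^ 2 / (16 * r656 x ^ 4) * ((1:ℝ)/6)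
          * ((192 * x ^ 5 - 384 * x ^ 11) / (2 * r656 x))) := by rw [key]
      _ = 2 * f656 x := by
          have h9 : 9 - r656 x ^ 2 = 8 * (1 - 2 * x ^ 6) ^ 2 := by rw [hr2]; ring
          rw [h9]
          have hx5 : x ^ 5 ≠ 0 := pow_ne_zero 5 (ne_of_gt hx0)
          have hw5 : (1 - 2 * x ^ 6) ^ 5 ≠ 0 := pow_ne_zero 5 (ne_of_gt hw)
          have hR5 : r656 x ≠ 0 := ne_of_gt hR0
          have hw1 : (1 - 2 * x ^ 6) ≠ 0 := ne_of_gt hw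
          field_simp
          have e : (1 - x ^ 6 * 2)⁻¹ * (1 - x ^ 6 * 2) = 1 := inv_mul_cancel₀ (by linarith)
          linear_combination (12288 * f656 x) * e
  have : f656 (y656 x)
      * ((9 - r656 x ^ 2) ^ 2 / (16 * r656 x ^ 4) * ((1:ℝ)/6)
        * ((r656 x - 1) * (r656 x + 3) ^ 3 / (16 * r656 x ^ 3)) ^ ((1:ℝ)/6 - 1)
        * ((192 * x ^ 5 - 384 * x ^ 11) / (2 * r656 x)))
      - 2 * f656 x = 0 := hval
  rw [← this]
  exact hfull

lemma endpoint_eq {f : ℝ → ℝ} {S : Set ℝ} {a C : ℝ} (hcl : a ∈ closure S)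
    (hc : ContinuousWithinAt f S a) (hk : ∀ x ∈ S, f x = C) : f a = C := by
  haveI h1 : (nhdsWithin a S).NeBot := mem_closure_iff_nhdsWithin_neBot.1 hcl
  have h2 : Filter.Tendsto f (nhdsWithin a S) (nhds C) := by
    apply Filter.Tendsto.congr' _ (tendsto_const_nhds (α := ℝ) (f := nhdsWithin a S))
    filter_upwards [eventually_mem_nhdsWithin] with t ht
    exact (hk t ht).symm
  exact tendsto_nhds_unique hc h2

noncomputable def phi656 (s : ℝ) : ℝ := (1 - s ^ 6) ^ ((1:ℝ)/6)

lemma phi656_mem {s : ℝ} (hs : s ∈ Set.Icc (0:ℝ) 1) : phi656 s ∈ Set.Icc (0:ℝ) 1 := by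
  constructor
  · exact Real.rpow_nonneg (c656_nonneg hs) _
  · exact Real.rpow_le_one (c656_nonneg hs) (by nlinarith [pow_nonneg hs.1 6]) (by norm_num)

lemma phi656_pow6 {s : ℝ} (hs : s ∈ Set.Icc (0:ℝ) 1) : phi656 s ^ 6 = 1 - s ^ 6 := by
  unfold phi656
  rw [rpow_nat_helper _ (c656_nonneg hs) _ 6]
  norm_num

lemma phi656_contAt (s : ℝ) : ContinuousAt phi656 s := by
  unfold phi656
  exact ContinuousAt.rpow_const (by fun_prop) (Or.inr (by norm_num))

lemma H656_hasDerivAt {x : ℝ} (hx : x ∈ Set.Ioo (0:ℝ) 1) :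
    HasDerivAt (fun t => G656 t + G656 (phi656 t)) 0 x := by
  obtain ⟨hx0, hx1⟩ := hx
  have hxI : x ∈ Set.Icc (0:ℝ) 1 := ⟨hx0.le, hx1.le⟩
  have hu1 : x ^ 6 < 1 := pow_lt_one₀ hx0.le hx1 (by norm_num)
  have hu0 : (0:ℝ) < x ^ 6 := pow_pos hx0 6
  have hc : (0:ℝ) < 1 - x ^ 6 := by linarith
  have hp6 : HasDerivAt (fun t : ℝ => t ^ 6) (6 * x ^ 5) x := by
    simpa using hasDerivAt_pow 6 x
  have hphid : HasDerivAt phi656 ((-(6 * x ^ 5)) * ((1:ℝ)/6) * (1 - x ^ 6) ^ ((1:ℝ)/6 - 1)) x := by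
    have h2 : HasDerivAt (fun t : ℝ => 1 - t ^ 6) (-(6 * x ^ 5)) x := hp6.const_sub 1
    exact h2.rpow_const (Or.inl (ne_of_gt hc))
  have hphi0 : 0 < phi656 x := Real.rpow_pos_of_pos hc _
  have hphi1 : phi656 x < 1 := Real.rpow_lt_one hc.le (by linarith) (by norm_num)
  have hGphi := G656_hasDerivAt ⟨hphi0.le, hphi1⟩
  have hGx := G656_hasDerivAt ⟨hx0.le, hx1⟩
  have hchain := hGphi.comp x hphid
  have hfull := hGx.add hchain
  have hfphi : f656 (phi656 x) = (x ^ 5)⁻¹ := by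
    show (1 - phi656 x ^ 6) ^ (-(5/6):ℝ) = _
    rw [phi656_pow6 hxI, show (1:ℝ) - (1 - x ^ 6) = x ^ 6 by ring]
    exact pow6_rpow_neg56 x hx0.le
  have hval : f656 x + f656 (phi656 x) * ((-(6 * x ^ 5)) * ((1:ℝ)/6) * (1 - x ^ 6) ^ ((1:ℝ)/6 - 1)) = 0 := by
    rw [hfphi, show ((1:ℝ)/6 - 1) = -(5/6 : ℝ) by norm_num]
    have hfx : f656 x = (1 - x ^ 6) ^ (-(5/6):ℝ) := rfl
    rw [hfx]
    have hx5 : x ^ 5 ≠ 0 := pow_ne_zero 5 (ne_of_gt hx0)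
    field_simp
    ring
  rw [← hval]
  exact hfull

lemma G656_symm {s : ℝ} (hs : s ∈ Set.Icc (0:ℝ) 1) :
    G656 s + G656 (phi656 s) = G656 1 := by
  have hH1 : G656 1 + G656 (phi656 1) = G656 1 := by
    have : phi656 1 = 0 := by
      unfold phi656
      norm_num
    rw [this, G656_zero, add_zero]
  have hHcont : ContinuousOn (fun t => G656 t + G656 (phi656 t)) (Set.Icc (0:ℝ) 1) := by
    apply ContinuousOn.add
    · exact G656_contOn
    · apply G656_contOn.comp (fun t ht => (phi656_contAt t).continuousWithinAt)
      intro t ht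
      exact phi656_mem ht
  rcases eq_or_lt_of_le hs.1 with h0 | h0
  · rw [← h0]
    have : phi656 0 = 1 := by
      unfold phi656
      norm_num
    rw [this, G656_zero, zero_add]
  rcases eq_or_lt_of_le hs.2 with h1 | h1
  · rw [h1]
    exact hH1
  -- s ∈ (0,1)
  have hstep : ∀ b ∈ Set.Ico s 1, G656 b + G656 (phi656 b) = G656 s + G656 (phi656 s) := by
    intro b hb
    have hconst := constant_of_has_deriv_right_zero
      (f := fun t => G656 t + G656 (phi656 t)) (a := s) (b := b)
      (hHcont.mono (Set.Icc_subset_Icc h0.le hb.2.le))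
      (fun y hy => (H656_hasDerivAt ⟨lt_of_lt_of_le h0 hy.1, lt_trans hy.2 hb.2⟩).hasDerivWithinAt)
    exact hconst b ⟨hb.1, le_refl b⟩
  have hend : G656 1 + G656 (phi656 1) = G656 s + G656 (phi656 s) := by
    apply endpoint_eq (S := Set.Ico s 1) (f := fun t => G656 t + G656 (phi656 t))
    · rw [closure_Ico (ne_of_lt h1)]
      exact ⟨h1.le, le_refl 1⟩
    · exact (hHcont.continuousWithinAt (by norm_num : (1:ℝ) ∈ Set.Icc (0:ℝ) 1)).mono
        (Set.Ico_subset_Icc_self.trans (Set.Icc_subset_Icc h0.le (le_refl 1)))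
    · exact hstep
  rw [← hend, hH1]

lemma sstar_mem : sstar ∈ Set.Icc (0:ℝ) 1 := ⟨sstar_pos.le, sstar_lt_one.le⟩

lemma r656_sstar : r656 sstar = 3 := by
  unfold r656
  rw [sstar_pow6]
  rw [show (1:ℝ) + 32 * (1/2) * (1 - 1/2) = 3 ^ 2 by norm_num]
  exact Real.sqrt_sq (by norm_num)

lemma y656_sstar : y656 sstar = 1 := by
  have h6 : y656 sstar ^ 6 = 1 := by
    rw [y656_pow6 sstar_mem, r656_sstar]
    norm_num
  have h0 := y656_nonneg sstar_mem
  have h1 := y656_le_one sstar_mem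
  rcases eq_or_lt_of_le h1 with h | h
  · exact h
  · exfalso
    have := pow_lt_one₀ h0 h (by norm_num : (6:ℕ) ≠ 0)
    rw [h6] at this
    norm_num at this

lemma G656_one_eq : G656 1 = 2 * G656 sstar := by
  have hsym := G656_symm sstar_mem
  have hphis : phi656 sstar = sstar := by
    unfold phi656
    rw [sstar_pow6]
    norm_num [sstar]
  rw [hphis] at hsym
  linarith

lemma Phi656_contOn : ContinuousOn (fun t => G656 (y656 t) - 2 * G656 t) (Set.Icc (0:ℝ) 1) := by
  apply ContinuousOn.sub
  · apply G656_contOn.comp (fun t ht => (y656_contAt ht).continuousWithinAt)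
    intro t ht
    exact ⟨y656_nonneg ht, y656_le_one ht⟩
  · exact continuousOn_const.mul G656_contOn

lemma main656 {s : ℝ} (hs : s ∈ Set.Icc (0:ℝ) 1) (h : 2 * G656 s ≤ G656 1) :
    G656 (y656 s) = 2 * G656 s := by
  rcases eq_or_lt_of_le hs.1 with h0 | h0
  · rw [← h0, y656_zero, G656_zero]
    norm_num
  have hsle : s ≤ sstar := by
    by_contra hcon
    push_neg at hcon
    have hs6 : 1/2 < s ^ 6 := by
      have hh := pow_lt_pow_left₀ hcon sstar_pos.le (by norm_num : (6:ℕ) ≠ 0)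
      rwa [sstar_pow6] at hh
    have hphi_lt : phi656 s < s := by
      have h6 : phi656 s ^ 6 < s ^ 6 := by
        rw [phi656_pow6 hs]
        linarith
      by_contra hc2
      push_neg at hc2
      have := pow_le_pow_left₀ hs.1 hc2 6
      linarith
    have hlt := G656_strictMono (phi656_mem hs) hs hphi_lt
    have hsym := G656_symm hs
    linarith
  rcases eq_or_lt_of_le hsle with heq | hlt
  · subst heq
    rw [y656_sstar]
    exact G656_one_eq
  -- s ∈ (0, sstar)
  have hs1 : s < 1 := lt_trans hlt sstar_lt_one
  have hkey : ∀ a ∈ Set.Ioc (0:ℝ) s,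
      (fun t => G656 (y656 t) - 2 * G656 t) a = G656 (y656 s) - 2 * G656 s := by
    intro a ha
    have hconst := constant_of_has_deriv_right_zero
      (f := fun t => G656 (y656 t) - 2 * G656 t) (a := a) (b := s)
      (Phi656_contOn.mono (Set.Icc_subset_Icc ha.1.le hs1.le))
      (fun y hy => (Phi656_hasDerivAt ⟨lt_of_lt_of_le ha.1 hy.1, lt_of_lt_of_le hy.2 hlt.le⟩).hasDerivWithinAt)
    have := hconst s ⟨ha.2, le_refl s⟩
    simpa using this.symm
  have hend : (fun t => G656 (y656 t) - 2 * G656 t) 0 = G656 (y656 s) - 2 * G656 s := by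
    apply endpoint_eq (S := Set.Ioc (0:ℝ) s) (f := fun t => G656 (y656 t) - 2 * G656 t) (a := (0:ℝ))
    · rw [closure_Ioc h0.ne]
      exact ⟨le_refl 0, h0.le⟩
    · exact (Phi656_contOn.continuousWithinAt (by constructor <;> norm_num)).mono
        (Set.Ioc_subset_Icc_self.trans (Set.Icc_subset_Icc (le_refl 0) hs1.le))
    · exact hkey
  simp only [y656_zero, G656_zero] at hend
  norm_num at hend
  linarith

/-- The double-angle formula for `sin_{6/5,6}`. -/
theorem double_angle_sin_six_fifths_six (s : ℝ) (hs : s ∈ Set.Icc (0:ℝ) 1)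
    (h : 2 * G656 s ≤ G656 1) :
    (2 ^ ((1:ℝ)/6) * s * (1 - s ^ 6) ^ ((1:ℝ)/6)
        * Real.sqrt (3 + Real.sqrt (1 + 32 * s ^ 6 * (1 - s ^ 6)))
        / ((1 + 32 * s ^ 6 * (1 - s ^ 6)) ^ ((1:ℝ)/4)
          * (1 + Real.sqrt (1 + 32 * s ^ 6 * (1 - s ^ 6))) ^ ((1:ℝ)/6)))
      ∈ Set.Icc (0:ℝ) 1 ∧
    G656 (2 ^ ((1:ℝ)/6) * s * (1 - s ^ 6) ^ ((1:ℝ)/6)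
        * Real.sqrt (3 + Real.sqrt (1 + 32 * s ^ 6 * (1 - s ^ 6)))
        / ((1 + 32 * s ^ 6 * (1 - s ^ 6)) ^ ((1:ℝ)/4)
          * (1 + Real.sqrt (1 + 32 * s ^ 6 * (1 - s ^ 6))) ^ ((1:ℝ)/6)))
      = 2 * G656 s := by
  have hrw : (2 ^ ((1:ℝ)/6) * s * (1 - s ^ 6) ^ ((1:ℝ)/6)
        * Real.sqrt (3 + Real.sqrt (1 + 32 * s ^ 6 * (1 - s ^ 6)))
        / ((1 + 32 * s ^ 6 * (1 - s ^ 6)) ^ ((1:ℝ)/4)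
          * (1 + Real.sqrt (1 + 32 * s ^ 6 * (1 - s ^ 6))) ^ ((1:ℝ)/6))) = y656 s := rfl
  rw [hrw]
  exact ⟨⟨y656_nonneg hs, y656_le_one hs⟩, main656 hs h⟩
end

section
/- Let 1 < q < ∞ and q* := q/(q−1). For every s ∈ [0,1], set y := 2^{2/q} · s · (1−s^q)^{1/q} (note y ∈ [0,1] since y^q = 4 s^q (1−s^q) ≤ 1). If 2^{2/q} F_{q*,q}(s) ≤ F_{2,q}(1), then F_{2,q}(y) = 2^{2/q} F_{q*,q}(s); if 2^{2/q} F_{q*,q}(s) ≥ F_{2,q}(1), then F_{2,q}(y) = 2 F_{2,q}(1) − 2^{2/q} F_{q*,q}(s). (This is the multiple-angle formula sin_{2,q}(2^{2/q} x) = 2^{2/q} sin_{q*,q}x cos_{q*,q}^{q*−1}x for x ∈ [0, π_{q*,q}/2].) -/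
/-- `Fpq p q x = ∫₀ˣ (1−t^q)^{−1/p} dt`, the inverse of the generalized sine `sin_{p,q}`. -/
noncomputable def Fpq (p q x : ℝ) : ℝ := ∫ t in (0:ℝ)..x, (1 - t ^ q) ^ (-(1/p))

open Real MeasureTheory Set intervalIntegral

lemma contOn_integrand (q : ℝ) (hq : 1 < q) (r : ℝ) :
    ContinuousOn (fun t : ℝ => (1 - t ^ q) ^ r) (Ico (0:ℝ) 1) := by
  intro t ht
  apply ContinuousAt.continuousWithinAt
  have h1 : ContinuousAt (fun t : ℝ => 1 - t ^ q) t :=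
    continuousAt_const.sub (Real.continuousAt_rpow_const t q (Or.inr (by linarith)))
  apply ContinuousAt.rpow_const h1
  left
  have : t ^ q < 1 := Real.rpow_lt_one ht.1 ht.2 (by linarith)
  intro h; rw [sub_eq_zero] at h; exact absurd h.symm (ne_of_lt this)

lemma integrable_aux (q : ℝ) (hq : 1 < q) {r : ℝ} (hr : -1 < r) (hr0 : r ≤ 0) :
    IntegrableOn (fun t : ℝ => (1 - t ^ q) ^ r) (Icc (0:ℝ) 1) := by
  have hmaj : IntervalIntegrable (fun t : ℝ => (1 - t) ^ r) volume 0 1 := by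
    have := (intervalIntegrable_rpow' (a := 0) (b := 1) hr).comp_sub_left 1
    simpa using this.symm
  have hmaj' : IntegrableOn (fun t : ℝ => (1 - t) ^ r) (Icc (0:ℝ) 1) := by
    rw [integrableOn_Icc_iff_integrableOn_Ioc]
    simpa [intervalIntegrable_iff_integrableOn_Ioc_of_le] using hmaj
  refine Integrable.mono hmaj' ?_ ?_
  · rw [Measure.restrict_congr_set Ico_ae_eq_Icc.symm]
    exact (contOn_integrand q hq r).aestronglyMeasurable measurableSet_Ico
  · filter_upwards [ae_restrict_mem measurableSet_Icc] with t ht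
    obtain ⟨ht0, ht1⟩ := ht
    have htq : t ^ q ≤ t := by
      rcases eq_or_lt_of_le ht0 with h | h
      · simp [← h, Real.zero_rpow (by positivity : q ≠ 0)]
      · calc t ^ q ≤ t ^ (1:ℝ) := Real.rpow_le_rpow_of_exponent_ge h ht1 hq.le
          _ = t := Real.rpow_one t
    have h1 : (0:ℝ) ≤ 1 - t ^ q := by
      have h2 : t ^ q ≤ 1 := htq.trans ht1
      linarith
    rw [Real.norm_of_nonneg (Real.rpow_nonneg h1 r),
        Real.norm_of_nonneg (Real.rpow_nonneg (by linarith) r)]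
    rcases eq_or_lt_of_le ht1 with h | h
    · subst h; simp [Real.one_rpow]
    · exact Real.rpow_le_rpow_of_nonpos (by linarith) (by linarith) hr0

lemma contF (q : ℝ) (hq : 1 < q) {r : ℝ} (hr : -1 < r) (hr0 : r ≤ 0) :
    ContinuousOn (fun x : ℝ => ∫ t in (0:ℝ)..x, (1 - t ^ q) ^ r) (Icc (0:ℝ) 1) := by
  have h := intervalIntegral.continuousOn_primitive_interval
    (a := (0:ℝ)) (b := 1) (μ := volume) (f := fun t : ℝ => (1 - t ^ q) ^ r) ?_
  · rwa [uIcc_of_le (by norm_num : (0:ℝ) ≤ 1)] at h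
  · rw [uIcc_of_le (by norm_num)]; exact integrable_aux q hq hr hr0

lemma intinteg_aux (q : ℝ) (hq : 1 < q) {r : ℝ} (hr : -1 < r) (hr0 : r ≤ 0)
    {a b : ℝ} (ha : a ∈ Icc (0:ℝ) 1) (hb : b ∈ Icc (0:ℝ) 1) :
    IntervalIntegrable (fun t : ℝ => (1 - t ^ q) ^ r) volume a b := by
  apply MeasureTheory.IntegrableOn.intervalIntegrable
  apply (integrable_aux q hq hr hr0).mono_set
  exact uIcc_subset_Icc ha hb

lemma strictF (q : ℝ) (hq : 1 < q) {r : ℝ} (hr : -1 < r) (hr0 : r ≤ 0)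
    {a b : ℝ} (ha : 0 ≤ a) (hab : a < b) (hb : b ≤ 1) :
    (∫ t in (0:ℝ)..a, (1 - t ^ q) ^ r) < ∫ t in (0:ℝ)..b, (1 - t ^ q) ^ r := by
  have h1 : IntervalIntegrable (fun t : ℝ => (1 - t ^ q) ^ r) volume 0 a :=
    intinteg_aux q hq hr hr0 (by constructor <;> norm_num) ⟨ha, by linarith⟩
  have h2 : IntervalIntegrable (fun t : ℝ => (1 - t ^ q) ^ r) volume a b :=
    intinteg_aux q hq hr hr0 ⟨ha, by linarith⟩ ⟨by linarith, hb⟩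
  have hpos : 0 < ∫ t in a..b, (1 - t ^ q) ^ r := by
    apply intervalIntegral.intervalIntegral_pos_of_pos_on h2 _ hab
    intro x hx
    have hx0 : 0 ≤ x := le_trans ha hx.1.le
    have hx1 : x < 1 := lt_of_lt_of_le hx.2 hb
    have : x ^ q < 1 := Real.rpow_lt_one hx0 hx1 (by linarith)
    exact Real.rpow_pos_of_pos (by linarith) r
  have := intervalIntegral.integral_add_adjacent_intervals h1 h2
  linarith

noncomputable def cc (q : ℝ) : ℝ := (2:ℝ) ^ ((2:ℝ)/q)

noncomputable def yy (q t : ℝ) : ℝ := cc q * t * (1 - t ^ q) ^ ((1:ℝ)/q)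

lemma cc_pos (q : ℝ) : 0 < cc q := Real.rpow_pos_of_pos (by norm_num) _

lemma yy_pow (q : ℝ) (hq : 1 < q) {t : ℝ} (ht0 : 0 ≤ t) (ht1 : t ≤ 1) :
    (yy q t) ^ q = 1 - (1 - 2 * t ^ q) ^ (2:ℕ) := by
  have hq0 : (0:ℝ) < q := by linarith
  have htq : t ^ q ≤ 1 := by
    calc t ^ q ≤ 1 ^ q := Real.rpow_le_rpow ht0 ht1 hq0.le
      _ = 1 := Real.one_rpow q
  have hu : (0:ℝ) ≤ 1 - t ^ q := by linarith
  have h1 : (yy q t) ^ q = (cc q) ^ q * t ^ q * (1 - t ^ q) := by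
    rw [yy, Real.mul_rpow (mul_nonneg (cc_pos q).le ht0) (Real.rpow_nonneg hu _),
        Real.mul_rpow (cc_pos q).le ht0, ← Real.rpow_mul hu, one_div,
        inv_mul_cancel₀ (ne_of_gt hq0), Real.rpow_one]
  have h2 : (cc q) ^ q = 4 := by
    rw [cc, ← Real.rpow_mul (by norm_num : (0:ℝ) ≤ 2)]
    rw [div_mul_cancel₀ _ (ne_of_gt hq0)]
    norm_num
  rw [h1, h2]; ring

lemma yy_hasDeriv (q : ℝ) (hq : 1 < q) {t : ℝ} (ht0 : 0 ≤ t) (ht1 : t < 1) :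
    HasDerivAt (yy q) (cc q * (1 - 2 * t ^ q) * (1 - t ^ q) ^ ((1:ℝ)/q - 1)) t := by
  have hq0 : (0:ℝ) < q := by linarith
  have htq : t ^ q < 1 := by
    rcases eq_or_lt_of_le ht0 with h | h
    · rw [← h, Real.zero_rpow (ne_of_gt hq0)]; norm_num
    · exact Real.rpow_lt_one ht0 ht1 hq0
  have hu : (0:ℝ) < 1 - t ^ q := by linarith
  have h1 : HasDerivAt (fun x : ℝ => x ^ q) (q * t ^ (q - 1)) t :=
    Real.hasDerivAt_rpow_const (Or.inr hq.le)
  have h2 : HasDerivAt (fun x : ℝ => 1 - x ^ q) (-(q * t ^ (q - 1))) t := h1.const_sub 1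
  have h3 : HasDerivAt (fun u : ℝ => u ^ ((1:ℝ)/q))
      ((1/q) * (1 - t ^ q) ^ ((1:ℝ)/q - 1)) (1 - t ^ q) :=
    Real.hasDerivAt_rpow_const (Or.inl (ne_of_gt hu))
  have h4 : HasDerivAt (fun x : ℝ => (1 - x ^ q) ^ ((1:ℝ)/q))
      ((1/q) * (1 - t ^ q) ^ ((1:ℝ)/q - 1) * (-(q * t ^ (q - 1)))) t := by have := h3.comp t h2; exact this
  have h5 : HasDerivAt (fun x : ℝ => cc q * x) (cc q) t := by
    simpa using (hasDerivAt_id t).const_mul (cc q)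
  have h6 := h5.mul h4
  have heq : cc q * (1 - 2 * t ^ q) * (1 - t ^ q) ^ ((1:ℝ)/q - 1)
      = cc q * ((1 - t ^ q) ^ ((1:ℝ)/q)) +
        (cc q * t) * ((1/q) * (1 - t ^ q) ^ ((1:ℝ)/q - 1) * (-(q * t ^ (q - 1)))) := by
    have key : t * t ^ (q - 1) = t ^ q := by
      rcases eq_or_lt_of_le ht0 with h | h
      · rw [← h, Real.zero_rpow (ne_of_gt hq0), zero_mul]
      · calc t * t ^ (q - 1) = t ^ (1:ℝ) * t ^ (q - 1) := by rw [Real.rpow_one]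
          _ = t ^ (1 + (q - 1)) := (Real.rpow_add h _ _).symm
          _ = t ^ q := by ring_nf
    have key2 : (1 - t ^ q) ^ ((1:ℝ)/q) = (1 - t ^ q) * (1 - t ^ q) ^ ((1:ℝ)/q - 1) := by
      nth_rewrite 2 [← Real.rpow_one (1 - t ^ q)]
      rw [← Real.rpow_add hu]; ring_nf
    have hinv : (1:ℝ)/q * q = 1 := by field_simp
    rw [key2]
    linear_combination (cc q * (1 - t^q) ^ ((1:ℝ)/q - 1) * t ^ q) * hinv +
      (cc q * (1 - t^q) ^ ((1:ℝ)/q - 1) * ((1:ℝ)/q) * q) * key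
  rw [heq]
  exact h6

lemma yy_nonneg (q : ℝ) (hq : 1 < q) {t : ℝ} (ht0 : 0 ≤ t) (ht1 : t ≤ 1) : 0 ≤ yy q t := by
  have : t ^ q ≤ 1 := by
    calc t ^ q ≤ 1 ^ q := Real.rpow_le_rpow ht0 ht1 (by linarith)
      _ = 1 := Real.one_rpow q
  exact mul_nonneg (mul_nonneg (cc_pos q).le ht0) (Real.rpow_nonneg (by linarith) _)

lemma yy_le_one (q : ℝ) (hq : 1 < q) {t : ℝ} (ht0 : 0 ≤ t) (ht1 : t ≤ 1) : yy q t ≤ 1 := by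
  by_contra h
  push_neg at h
  have h1 : (1:ℝ) < (yy q t) ^ q := by
    calc (1:ℝ) = 1 ^ q := (Real.one_rpow q).symm
      _ < (yy q t) ^ q := Real.rpow_lt_rpow (by norm_num) h (by linarith)
  rw [yy_pow q hq ht0 ht1] at h1
  nlinarith [sq_nonneg (1 - 2 * t ^ q)]

lemma yy_lt_one (q : ℝ) (hq : 1 < q) {t : ℝ} (ht0 : 0 ≤ t) (ht1 : t ≤ 1)
    (hne : 1 - 2 * t ^ q ≠ 0) : yy q t < 1 := by
  rcases eq_or_lt_of_le (yy_le_one q hq ht0 ht1) with h | h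
  · exfalso
    have h1 : (yy q t) ^ q = 1 := by rw [h, Real.one_rpow]
    rw [yy_pow q hq ht0 ht1] at h1
    have : (1 - 2 * t ^ q) ^ (2:ℕ) = 0 := by linarith
    exact hne (by nlinarith [sq_nonneg (1 - 2*t^q)])
  · exact h

lemma cov (q : ℝ) (hq : 1 < q) {a b : ℝ} (ha : 0 ≤ a) (hab : a ≤ b) (hb : b < 1)
    (ε : ℝ) (hε : ε = 1 ∨ ε = -1)
    (hsgn : ∀ t ∈ Icc a b, 0 < ε * (1 - 2 * t ^ q)) :
    ∫ x in (yy q a)..(yy q b), (1 - x ^ q) ^ (-(1/2) : ℝ)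
      = ε * cc q * ∫ t in a..b, (1 - t ^ q) ^ ((1:ℝ)/q - 1) := by
  have hq0 : (0:ℝ) < q := by linarith
  have huIcc : uIcc a b = Icc a b := uIcc_of_le hab
  have hmem : ∀ x ∈ Icc a b, 0 ≤ x ∧ x < 1 := fun x hx => ⟨ha.trans hx.1, lt_of_le_of_lt hx.2 hb⟩
  have hderiv : ∀ x ∈ uIcc a b,
      HasDerivAt (yy q) (cc q * (1 - 2 * x ^ q) * (1 - x ^ q) ^ ((1:ℝ)/q - 1)) x := by
    intro x hx; rw [huIcc] at hx
    exact yy_hasDeriv q hq (hmem x hx).1 (hmem x hx).2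
  have hune : ∀ x ∈ Icc a b, (1:ℝ) - x ^ q ≠ 0 := by
    intro x hx
    have : x ^ q < 1 := Real.rpow_lt_one (hmem x hx).1 (hmem x hx).2 hq0
    intro hc; rw [sub_eq_zero] at hc; exact absurd hc.symm (ne_of_lt this)
  have hcont' : ContinuousOn
      (fun x : ℝ => cc q * (1 - 2 * x ^ q) * (1 - x ^ q) ^ ((1:ℝ)/q - 1)) (uIcc a b) := by
    rw [huIcc]
    have hxq : ContinuousOn (fun x : ℝ => x ^ q) (Icc a b) := fun x _ =>
      (Real.continuousAt_rpow_const x q (Or.inr hq0.le)).continuousWithinAt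
    exact (continuousOn_const.mul (continuousOn_const.sub (continuousOn_const.mul hxq))).mul
      (ContinuousOn.rpow_const (continuousOn_const.sub hxq) fun x hx => Or.inl (hune x hx))
  have himg : yy q '' uIcc a b ⊆ Ico 0 1 := by
    rw [huIcc]
    rintro _ ⟨x, hx, rfl⟩
    have h1 := hmem x hx
    refine ⟨yy_nonneg q hq h1.1 h1.2.le, yy_lt_one q hq h1.1 h1.2.le ?_⟩
    intro hc
    have := hsgn x hx
    rw [hc, mul_zero] at this; exact lt_irrefl 0 this
  have hg : ContinuousOn (fun x : ℝ => (1 - x ^ q) ^ (-(1/2) : ℝ)) (yy q '' uIcc a b) :=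
    (contOn_integrand q hq (-(1/2))).mono himg
  have key := intervalIntegral.integral_comp_smul_deriv' hderiv hcont' hg
  rw [← key]
  rw [intervalIntegral.integral_congr (g := fun x : ℝ => (ε * cc q) * (1 - x ^ q) ^ ((1:ℝ)/q - 1))
      ?_, intervalIntegral.integral_const_mul]
  intro x hx
  rw [huIcc] at hx
  set w := 1 - 2 * x ^ q with hw
  have hwpos : 0 < ε * w := hsgn x hx
  have hwne : w ≠ 0 := by rcases hε with h | h <;> (rw [h] at hwpos; intro hc) <;>
    (rw [hc] at hwpos; simp at hwpos)
  have habs : |w| = ε * w := by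
    rcases hε with h | h
    · rw [h, one_mul]; rw [h, one_mul] at hwpos; exact abs_of_pos hwpos
    · rw [h] at hwpos ⊢; rw [abs_of_neg (by linarith)]; ring
  have hyx : (1:ℝ) - (yy q x) ^ q = w ^ (2:ℕ) := by
    rw [yy_pow q hq (hmem x hx).1 (hmem x hx).2.le]; ring
  have hginner : ((1:ℝ) - (yy q x) ^ q) ^ (-(1/2) : ℝ) = |w|⁻¹ := by
    rw [hyx, ← sq_abs, ← Real.rpow_natCast |w| 2, ← Real.rpow_mul (abs_nonneg w)]
    norm_num [Real.rpow_neg_one]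
  show _ • _ = _
  rw [smul_eq_mul, Function.comp_apply, hginner, habs]
  rcases hε with h | h <;> subst h
  · rw [one_mul]
    linear_combination (cc q * (1 - x ^ q) ^ ((1:ℝ)/q - 1)) * mul_inv_cancel₀ hwne
  · rw [neg_one_mul, inv_neg]
    linear_combination (-(cc q * (1 - x ^ q) ^ ((1:ℝ)/q - 1))) * mul_inv_cancel₀ hwne

noncomputable def s₀ (q : ℝ) : ℝ := ((2:ℝ)⁻¹) ^ ((1:ℝ)/q)

lemma s0_pow (q : ℝ) (hq : 1 < q) : (s₀ q) ^ q = 2⁻¹ := by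
  rw [s₀, ← Real.rpow_mul (by norm_num), one_div,
      inv_mul_cancel₀ (by positivity : q ≠ 0), Real.rpow_one]

lemma s0_pos (q : ℝ) : 0 < s₀ q := Real.rpow_pos_of_pos (by norm_num) _

lemma s0_lt_one (q : ℝ) (hq : 1 < q) : s₀ q < 1 :=
  Real.rpow_lt_one (by norm_num) (by norm_num) (by positivity)

lemma yy_s0 (q : ℝ) (hq : 1 < q) : yy q (s₀ q) = 1 := by
  have h0 := s0_pos q
  have h1 := s0_lt_one q hq
  have hy0 := yy_nonneg q hq h0.le h1.le
  have hpow : (yy q (s₀ q)) ^ q = 1 := by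
    rw [yy_pow q hq h0.le h1.le, s0_pow q hq]; norm_num
  rcases lt_trichotomy (yy q (s₀ q)) 1 with h | h | h
  · exfalso
    have := Real.rpow_lt_one (z := q) hy0 h (by linarith)
    rw [hpow] at this; exact lt_irrefl 1 this
  · exact h
  · exfalso
    have : (1:ℝ) < (yy q (s₀ q)) ^ q := by
      calc (1:ℝ) = 1 ^ q := (Real.one_rpow q).symm
        _ < _ := Real.rpow_lt_rpow (by norm_num) h (by linarith)
    rw [hpow] at this; exact lt_irrefl 1 this

lemma yy_zero (q : ℝ) : yy q 0 = 0 := by simp [yy]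

section main
variable {q : ℝ} (hq : 1 < q)

private noncomputable def F2 (q x : ℝ) : ℝ := ∫ t in (0:ℝ)..x, (1 - t ^ q) ^ (-(1/2) : ℝ)
private noncomputable def FQ (q x : ℝ) : ℝ := ∫ t in (0:ℝ)..x, (1 - t ^ q) ^ ((1:ℝ)/q - 1)

include hq

lemma hr2 : (-1:ℝ) < (1:ℝ)/q - 1 ∧ (1:ℝ)/q - 1 ≤ 0 := by
  have h1 : 0 < 1/q := by positivity
  have h2 : 1/q ≤ 1 := by rw [div_le_one (by linarith)]; linarith
  constructor <;> linarith

lemma E1' {s : ℝ} (hs0 : 0 ≤ s) (hs1 : s < s₀ q) : F2 q (yy q s) = cc q * FQ q s := by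
  have hq0 : (0:ℝ) < q := by linarith
  have hs1' : s < 1 := hs1.trans (s0_lt_one q hq)
  have hsq : s ^ q < 2⁻¹ := by
    rw [← s0_pow q hq]
    exact Real.rpow_lt_rpow hs0 hs1 hq0
  have h := cov q hq (a := 0) (b := s) le_rfl hs0 hs1' 1 (Or.inl rfl) ?_
  · rw [yy_zero, one_mul] at h
    exact h
  · intro t ht
    have : t ^ q ≤ s ^ q := Real.rpow_le_rpow ht.1 ht.2 hq0.le
    rw [one_mul]; linarith

lemma contF2 : ContinuousOn (F2 q) (Icc (0:ℝ) 1) := contF q hq (by norm_num) (by norm_num)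

lemma contFQ : ContinuousOn (FQ q) (Icc (0:ℝ) 1) := contF q hq (hr2 hq).1 (hr2 hq).2

lemma contYY : ContinuousOn (yy q) (Icc (0:ℝ) 1) := by
  have hq0 : (0:ℝ) < q := by linarith
  have hxq : ContinuousOn (fun x : ℝ => x ^ q) (Icc (0:ℝ) 1) := fun x _ =>
    (Real.continuousAt_rpow_const x q (Or.inr hq0.le)).continuousWithinAt
  exact (continuousOn_const.mul continuousOn_id).mul
    ((continuousOn_const.sub hxq).rpow_const fun x _ => Or.inr (by positivity))

lemma contPhi : ContinuousOn (fun s => F2 q (yy q s)) (Icc (0:ℝ) 1) := by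
  apply (contF2 hq).comp (contYY hq)
  intro x hx
  exact ⟨yy_nonneg q hq hx.1 hx.2, yy_le_one q hq hx.1 hx.2⟩

lemma E1s0 : F2 q 1 = cc q * FQ q (s₀ q) := by
  have h0 := s0_pos q
  have h1 := s0_lt_one q hq
  have hmem : s₀ q ∈ Icc (0:ℝ) 1 := ⟨h0.le, h1.le⟩
  have hsub : Ico (0:ℝ) (s₀ q) ⊆ Icc (0:ℝ) 1 := fun x hx => ⟨hx.1, (hx.2.trans h1).le⟩
  have hnb : (nhdsWithin (s₀ q) (Ico (0:ℝ) (s₀ q))).NeBot := by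
    rw [← mem_closure_iff_nhdsWithin_neBot, closure_Ico (ne_of_lt h0)]
    exact ⟨h0.le, le_rfl⟩
  have hT1 : Filter.Tendsto (fun s => F2 q (yy q s)) (nhdsWithin (s₀ q) (Ico (0:ℝ) (s₀ q)))
      (nhds (F2 q (yy q (s₀ q)))) :=
    ((contPhi hq (s₀ q) hmem).mono hsub)
  have hT2 : Filter.Tendsto (fun s => cc q * FQ q s) (nhdsWithin (s₀ q) (Ico (0:ℝ) (s₀ q)))
      (nhds (cc q * FQ q (s₀ q))) :=
    (((contFQ hq (s₀ q) hmem).const_smul (cc q)).mono hsub)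
  have heq : (fun s => F2 q (yy q s)) =ᶠ[nhdsWithin (s₀ q) (Ico (0:ℝ) (s₀ q))]
      (fun s => cc q * FQ q s) := by
    filter_upwards [self_mem_nhdsWithin] with s hs
    exact E1' hq hs.1 hs.2
  have := tendsto_nhds_unique (hT1.congr' heq) hT2
  rw [yy_s0 q hq] at this
  exact this

lemma dec' {a b : ℝ} (ha : s₀ q < a) (hab : a ≤ b) (hb : b < 1) :
    F2 q (yy q b) + cc q * FQ q b = F2 q (yy q a) + cc q * FQ q a := by
  have hq0 : (0:ℝ) < q := by linarith
  have ha0 : 0 ≤ a := (s0_pos q).le.trans ha.le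
  have haq : (2:ℝ)⁻¹ < a ^ q := by
    rw [← s0_pow q hq]
    exact Real.rpow_lt_rpow (s0_pos q).le ha hq0
  have hmem : ∀ t ∈ Icc a b, t ∈ Icc (0:ℝ) 1 :=
    fun t ht => ⟨ha0.trans ht.1, (ht.2.trans hb.le)⟩
  have h := cov q hq (a := a) (b := b) ha0 hab hb (-1) (Or.inr rfl) ?_
  · have hya : yy q a ∈ Icc (0:ℝ) 1 :=
      ⟨yy_nonneg q hq ha0 (by linarith), yy_le_one q hq ha0 (by linarith)⟩
    have hyb : yy q b ∈ Icc (0:ℝ) 1 :=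
      ⟨yy_nonneg q hq (ha0.trans hab) hb.le, yy_le_one q hq (ha0.trans hab) hb.le⟩
    have h0 : (0:ℝ) ∈ Icc (0:ℝ) 1 := by norm_num
    have hadd1 := intervalIntegral.integral_add_adjacent_intervals
      (intinteg_aux q hq (by norm_num : (-1:ℝ) < -(1/2)) (by norm_num) h0 hya)
      (intinteg_aux q hq (by norm_num : (-1:ℝ) < -(1/2)) (by norm_num) hya hyb)
    have hadd2 := intervalIntegral.integral_add_adjacent_intervals
      (intinteg_aux q hq (hr2 hq).1 (hr2 hq).2 h0 ⟨ha0, by linarith⟩)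
      (intinteg_aux q hq (hr2 hq).1 (hr2 hq).2 ⟨ha0, by linarith⟩ ⟨ha0.trans hab, hb.le⟩)
    simp only [F2, FQ]
    have h' : (∫ x in (0:ℝ)..(yy q b), (1 - x ^ q) ^ (-(1/2):ℝ))
        - (∫ x in (0:ℝ)..(yy q a), (1 - x ^ q) ^ (-(1/2):ℝ))
        = -1 * cc q * ((∫ t in (0:ℝ)..b, (1 - t ^ q) ^ ((1:ℝ)/q - 1))
          - ∫ t in (0:ℝ)..a, (1 - t ^ q) ^ ((1:ℝ)/q - 1)) := by
      rw [← hadd1, ← hadd2] at *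
      rw [h]; ring
    linarith [h']
  · intro t ht
    have : a ^ q ≤ t ^ q := Real.rpow_le_rpow ha0 ht.1 hq0.le
    nlinarith

lemma E2full : ∀ s ∈ Icc (s₀ q) 1, F2 q (yy q s) = 2 * F2 q 1 - cc q * FQ q s := by
  have hq0 : (0:ℝ) < q := by linarith
  have h0 := s0_pos q
  have h1 := s0_lt_one q hq
  set Θ : ℝ → ℝ := fun s => F2 q (yy q s) + cc q * FQ q s with hΘ
  have hcont : ContinuousOn Θ (Icc (0:ℝ) 1) :=
    (contPhi hq).add ((contFQ hq).const_smul (cc q))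
  have hΘs0 : Θ (s₀ q) = 2 * F2 q 1 := by
    simp only [hΘ, yy_s0 q hq, ← E1s0 hq]; ring
  have key : ∀ s ∈ Ioo (s₀ q) 1, Θ s = 2 * F2 q 1 := by
    intro s hsmem
    have hsub : Ioc (s₀ q) s ⊆ Icc (0:ℝ) 1 :=
      fun x hx => ⟨h0.le.trans hx.1.le, hx.2.trans hsmem.2.le⟩
    have hnb : (nhdsWithin (s₀ q) (Ioc (s₀ q) s)).NeBot := by
      rw [← mem_closure_iff_nhdsWithin_neBot, closure_Ioc (ne_of_lt hsmem.1)]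
      exact ⟨le_rfl, hsmem.1.le⟩
    have hT : Filter.Tendsto Θ (nhdsWithin (s₀ q) (Ioc (s₀ q) s)) (nhds (Θ (s₀ q))) :=
      (hcont (s₀ q) ⟨h0.le, h1.le⟩).mono hsub
    have heq : Θ =ᶠ[nhdsWithin (s₀ q) (Ioc (s₀ q) s)] fun _ => Θ s := by
      filter_upwards [self_mem_nhdsWithin] with a ha
      exact (dec' hq ha.1 ha.2 hsmem.2).symm
    have h2 := tendsto_nhds_unique (hT.congr' heq) tendsto_const_nhds
    rw [← h2, hΘs0]
  intro s hsmem
  rcases eq_or_lt_of_le hsmem.1 with h | hs1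
  · simp only [hΘ] at hΘs0
    rw [← h]; linarith [hΘs0]
  rcases eq_or_lt_of_le hsmem.2 with h | hs2
  · -- s = 1 : limit from the left
    subst h
    have hsub : Ioo (s₀ q) 1 ⊆ Icc (0:ℝ) 1 :=
      fun x hx => ⟨h0.le.trans hx.1.le, hx.2.le⟩
    have hnb : (nhdsWithin (1:ℝ) (Ioo (s₀ q) 1)).NeBot := by
      rw [← mem_closure_iff_nhdsWithin_neBot, closure_Ioo (ne_of_lt h1)]
      exact ⟨h1.le, le_rfl⟩
    have hT : Filter.Tendsto Θ (nhdsWithin (1:ℝ) (Ioo (s₀ q) 1)) (nhds (Θ 1)) :=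
      (hcont 1 (by norm_num)).mono hsub
    have heq : Θ =ᶠ[nhdsWithin (1:ℝ) (Ioo (s₀ q) 1)] fun _ => 2 * F2 q 1 := by
      filter_upwards [self_mem_nhdsWithin] with a ha
      exact key a ha
    have h2 := tendsto_nhds_unique (hT.congr' heq) tendsto_const_nhds
    simp only [hΘ] at h2; linarith [h2]
  · have h2 := key s ⟨hs1, hs2⟩
    simp only [hΘ] at h2; linarith [h2]

end main

/-- The multiple-angle formula `sin_{2,q}(2^{2/q} x) = 2^{2/q} sin_{q*,q} x cos_{q*,q}^{q*−1} x`. -/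
theorem multiple_angle_formula (q : ℝ) (hq : 1 < q) (s : ℝ) (hs : s ∈ Set.Icc (0:ℝ) 1) :
    (2 ^ ((2:ℝ)/q) * s * (1 - s ^ q) ^ (1/q)) ∈ Set.Icc (0:ℝ) 1 ∧
    (2 ^ ((2:ℝ)/q) * Fpq (q / (q - 1)) q s ≤ Fpq 2 q 1 →
      Fpq 2 q (2 ^ ((2:ℝ)/q) * s * (1 - s ^ q) ^ (1/q))
        = 2 ^ ((2:ℝ)/q) * Fpq (q / (q - 1)) q s) ∧
    (Fpq 2 q 1 ≤ 2 ^ ((2:ℝ)/q) * Fpq (q / (q - 1)) q s →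
      Fpq 2 q (2 ^ ((2:ℝ)/q) * s * (1 - s ^ q) ^ (1/q))
        = 2 * Fpq 2 q 1 - 2 ^ ((2:ℝ)/q) * Fpq (q / (q - 1)) q s) := by
  have hq0 : (0:ℝ) < q := by linarith
  obtain ⟨hs0, hs1⟩ := hs
  have hyyeq : (2:ℝ) ^ ((2:ℝ)/q) * s * (1 - s ^ q) ^ (1/q) = yy q s := rfl
  have hF2eq : ∀ x, Fpq 2 q x = F2 q x := fun x => by norm_num [Fpq, F2]
  have hFQeq : ∀ x, Fpq (q/(q-1)) q x = FQ q x := by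
    intro x
    have hexp : -(1/(q/(q-1))) = (1:ℝ)/q - 1 := by
      rw [one_div_div]; field_simp; ring
    simp only [Fpq, FQ, hexp]
  have hE1full : s ≤ s₀ q → F2 q (yy q s) = cc q * FQ q s := by
    intro hle
    rcases eq_or_lt_of_le hle with h | h
    · rw [h, yy_s0 q hq]; exact E1s0 hq
    · exact E1' hq hs0 h
  have hFQmono : ∀ {a b : ℝ}, 0 ≤ a → a < b → b ≤ 1 → FQ q a < FQ q b :=
    fun ha hab hb => strictF q hq (hr2 hq).1 (hr2 hq).2 ha hab hb
  refine ⟨?_, ?_, ?_⟩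
  · rw [hyyeq]
    exact ⟨yy_nonneg q hq hs0 hs1, yy_le_one q hq hs0 hs1⟩
  · intro h
    rw [hyyeq]
    simp only [hF2eq, hFQeq] at h ⊢
    rcases le_or_gt s (s₀ q) with hle | hlt
    · exact hE1full hle
    · exfalso
      have h1 : FQ q (s₀ q) < FQ q s := hFQmono (s0_pos q).le hlt hs1
      have h2 : cc q * FQ q (s₀ q) < cc q * FQ q s :=
        mul_lt_mul_of_pos_left h1 (cc_pos q)
      have h3 := E1s0 hq
      have hcc : cc q = (2:ℝ) ^ ((2:ℝ)/q) := rfl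
      rw [← hcc] at h
      linarith
  · intro h
    rw [hyyeq]
    simp only [hF2eq, hFQeq] at h ⊢
    have hcc : cc q = (2:ℝ) ^ ((2:ℝ)/q) := rfl
    rw [← hcc] at h ⊢
    rcases le_or_gt (s₀ q) s with hle | hlt
    · exact E2full hq s ⟨hle, hs1⟩
    · exfalso
      have h1 : FQ q s < FQ q (s₀ q) := hFQmono hs0 hlt (s0_lt_one q hq).le
      have h2 : cc q * FQ q s < cc q * FQ q (s₀ q) :=
        mul_lt_mul_of_pos_left h1 (cc_pos q)
      have h3 := E1s0 hq
      linarith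
end

section
/- Let 1 < p, q < ∞, p* := p/(p−1) and q* := q/(q−1). Then q · ∫₀¹ (1−t^q)^{−1/p} dt = p* · ∫₀¹ (1−t^{p*})^{−1/q*} dt. (Equivalently, q π_{p,q} = p* π_{q*,p*}.) -/
open MeasureTheory Set

/-- Image of `Ioo 0 1` under `t ↦ t ^ r`. -/
lemma rpow_image_Ioo' (r : ℝ) (hr : 0 < r) :
    (fun t : ℝ => t ^ r) '' Set.Ioo 0 1 = Set.Ioo 0 1 := by
  ext u
  constructor
  · rintro ⟨t, ⟨ht0, ht1⟩, rfl⟩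
    exact ⟨Real.rpow_pos_of_pos ht0 r, Real.rpow_lt_one ht0.le ht1 hr⟩
  · rintro ⟨hu0, hu1⟩
    refine ⟨u ^ (1/r), ⟨Real.rpow_pos_of_pos hu0 _, Real.rpow_lt_one hu0.le hu1 (by positivity)⟩, ?_⟩
    show (u ^ (1/r)) ^ r = u
    rw [← Real.rpow_mul hu0.le, one_div, inv_mul_cancel₀ hr.ne', Real.rpow_one]

/-- Change of variables `u = t ^ r` on `Ioo 0 1`. -/
lemma cov_rpow (r : ℝ) (hr : 1 < r) (f : ℝ → ℝ) :
    ∫ u in Set.Ioo (0:ℝ) 1, f u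
      = ∫ t in Set.Ioo (0:ℝ) 1, (r * t ^ (r - 1)) * f (t ^ r) := by
  have h0 : (0:ℝ) < r := by linarith
  have := MeasureTheory.integral_image_eq_integral_abs_deriv_smul
    (s := Set.Ioo (0:ℝ) 1) (f := fun t : ℝ => t ^ r) (f' := fun t : ℝ => r * t ^ (r - 1))
    measurableSet_Ioo
    (fun x hx => (Real.hasDerivAt_rpow_const (Or.inl hx.1.ne')).hasDerivWithinAt)
    (fun x hx y hy hxy => by
      have : StrictMonoOn (fun t : ℝ => t ^ r) (Set.Ioo (0:ℝ) 1) := fun a ha b hb hab =>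
        Real.rpow_lt_rpow ha.1.le hab h0
      exact this.injOn hx hy hxy) f
  rw [rpow_image_Ioo' r h0] at this
  rw [this]
  refine MeasureTheory.setIntegral_congr_fun measurableSet_Ioo (fun x hx => ?_)
  have hx0 : (0:ℝ) < x := hx.1
  have : |r * x ^ (r - 1)| = r * x ^ (r - 1) := by
    rw [abs_of_pos]; positivity
  simp [this, smul_eq_mul]

/-- Symmetry `u ↦ 1 - u` on `Ioo 0 1`. -/
lemma symm_Ioo (f : ℝ → ℝ) :
    ∫ u in Set.Ioo (0:ℝ) 1, f (1 - u) = ∫ u in Set.Ioo (0:ℝ) 1, f u := by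
  have himg : (fun u : ℝ => 1 - u) '' Set.Ioo 0 1 = Set.Ioo 0 1 := by
    ext u
    constructor
    · rintro ⟨t, ⟨ht0, ht1⟩, rfl⟩
      exact ⟨by simp; linarith, by simp; linarith⟩
    · rintro ⟨hu0, hu1⟩; exact ⟨1 - u, ⟨by linarith, by linarith⟩, by ring⟩
  have := MeasureTheory.integral_image_eq_integral_abs_deriv_smul
    (s := Set.Ioo (0:ℝ) 1) (f := fun u : ℝ => 1 - u) (f' := fun _ : ℝ => (-1 : ℝ))
    measurableSet_Ioo
    (fun x _ => by simpa using ((hasDerivAt_id x).const_sub (1:ℝ)).hasDerivWithinAt)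
    (fun x _ y _ hxy => by dsimp at hxy; linarith) f
  rw [himg] at this
  rw [this]
  simp

/-- Key reduction to a Beta-type integral. -/
lemma key (r s : ℝ) (hr : 1 < r) :
    r * ∫ t in (0:ℝ)..1, (1 - t ^ r) ^ s
      = ∫ u in Set.Ioo (0:ℝ) 1, u ^ (1/r - 1) * (1 - u) ^ s := by
  rw [intervalIntegral.integral_of_le (by norm_num : (0:ℝ) ≤ 1),
    MeasureTheory.integral_Ioc_eq_integral_Ioo,
    cov_rpow r hr (fun u => u ^ (1/r - 1) * (1 - u) ^ s),
    ← MeasureTheory.integral_const_mul]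
  refine MeasureTheory.setIntegral_congr_fun measurableSet_Ioo (fun x hx => ?_)
  have hx0 : (0:ℝ) < x := hx.1
  have e1 : (x ^ r) ^ (1/r - 1) = x ^ (r * (1/r - 1)) := by
    rw [← Real.rpow_mul hx0.le]
  have e2 : r * (1/r - 1) = 1 - r := by field_simp
  rw [e1, e2]
  rw [show r * x ^ (r - 1) * (x ^ (1 - r) * (1 - x ^ r) ^ s)
      = r * (x ^ (r - 1) * x ^ (1 - r)) * (1 - x ^ r) ^ s by ring,
    ← Real.rpow_add hx0]
  norm_num

/-- The duality relation `q π_{p,q} = p* π_{q*,p*}` between generalized π's. -/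
theorem q_pi_pq_eq_pstar_pi_qstar_pstar (p q : ℝ) (hp : 1 < p) (hq : 1 < q) :
    q * ∫ t in (0:ℝ)..1, (1 - t ^ q) ^ (-(1/p))
      = (p / (p - 1)) * ∫ t in (0:ℝ)..1, (1 - t ^ (p / (p - 1))) ^ (-(1/(q / (q - 1)))) := by
  have hp1 : (0:ℝ) < p - 1 := by linarith
  have hq1 : (0:ℝ) < q - 1 := by linarith
  have hpc : 1 < p / (p - 1) := by rw [lt_div_iff₀ hp1]; linarith
  rw [key q (-(1/p)) hq, key (p / (p - 1)) (-(1/(q / (q - 1)))) hpc]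
  have e1 : 1 / (p / (p - 1)) - 1 = -(1/p) := by field_simp; ring
  have e2 : -(1/(q / (q - 1))) = 1/q - 1 := by field_simp; ring
  rw [e1, e2]
  rw [← symm_Ioo (fun u => u ^ (-(1/p)) * (1 - u) ^ (1/q - 1))]
  refine MeasureTheory.setIntegral_congr_fun measurableSet_Ioo (fun x hx => ?_)
  beta_reduce
  rw [sub_sub_cancel]
  ring
end

section
/- Let 1 < p, q < ∞, p* := p/(p−1) and q* := q/(q−1). For all s, t ∈ [0,1] with s^q + t^{p*} = 1, one has ∫₀ᵗ (1−u^{p*})^{−1/q*} du + (q/p*) · ∫₀ˢ (1−u^q)^{−1/p} du = ∫₀¹ (1−u^{p*})^{−1/q*} du. (This is the duality formula sin_{p,q}(π_{p,q} x/2) = cos_{q*,p*}^{q*−1}(π_{q*,p*}(1−x)/2) expressed in terms of the integrals F_{p,q} and F_{q*,p*}.) -/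
open MeasureTheory Set

lemma aux_integrable {r c : ℝ} (hr : 1 ≤ r) (hc : -1 < c) (hc0 : c ≤ 0) :
    IntegrableOn (fun u : ℝ => (1 - u ^ r) ^ c) (Ioo (0:ℝ) 1) := by
  have hbound : IntegrableOn (fun u : ℝ => (1 - u) ^ c) (Ioo (0:ℝ) 1) := by
    have h1 : IntervalIntegrable (fun x : ℝ => x ^ c) volume 0 1 :=
      intervalIntegral.intervalIntegrable_rpow' hc
    have h2 := h1.comp_sub_left 1
    simp only [sub_zero, sub_self] at h2
    have := h2.symm
    rw [intervalIntegrable_iff_integrableOn_Ioo_of_le zero_le_one] at this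
    exact this
  have hmeas : AEStronglyMeasurable (fun u : ℝ => (1 - u ^ r) ^ c)
      (volume.restrict (Ioo (0:ℝ) 1)) := by
    apply Measurable.aestronglyMeasurable
    exact (measurable_const.sub (measurable_id.pow_const r)).pow_const c
  refine Integrable.mono hbound hmeas ?_
  rw [ae_restrict_iff' measurableSet_Ioo]
  refine ae_of_all _ fun u hu => ?_
  have hu0 := hu.1
  have hu1 := hu.2
  have hur : u ^ r ≤ u := by
    nth_rewrite 2 [← Real.rpow_one u]
    exact Real.rpow_le_rpow_of_exponent_ge hu0 hu1.le hr
  have h1u : (0:ℝ) < 1 - u := by linarith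
  have h1ur : 1 - u ≤ 1 - u ^ r := by linarith
  rw [Real.norm_eq_abs, Real.norm_eq_abs, abs_of_nonneg (Real.rpow_nonneg (by linarith) _),
    abs_of_nonneg (Real.rpow_nonneg h1u.le _)]
  exact Real.rpow_le_rpow_of_nonpos h1u h1ur hc0

lemma key_subst (p q s : ℝ) (hp : 1 < p) (hq : 1 < q) (hs0 : 0 < s) (hs1 : s ≤ 1) :
    ∫ u in Ioo ((1 - s ^ q) ^ (p / (p - 1))⁻¹) 1,
        (1 - u ^ (p / (p - 1))) ^ (-(1 / (q / (q - 1))))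
      = (q / (p / (p - 1))) * ∫ u in Ioo (0:ℝ) s, (1 - u ^ q) ^ (-(1 / p)) := by
  have hp0 : (0:ℝ) < p := by linarith
  have hq0 : (0:ℝ) < q := by linarith
  have hp1 : (0:ℝ) < p - 1 := by linarith
  have hq1 : (0:ℝ) < q - 1 := by linarith
  set P := p / (p - 1) with hPdef
  set Q := q / (q - 1) with hQdef
  have hP0 : (0:ℝ) < P := by positivity
  have hQ0 : (0:ℝ) < Q := by positivity
  have hsq1 : s ^ q ≤ 1 := Real.rpow_le_one hs0.le hs1 hq0.le
  have hsq0 : 0 < s ^ q := Real.rpow_pos_of_pos hs0 q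
  set f : ℝ → ℝ := fun u => (1 - u ^ P) ^ (-(1 / Q)) with hfdef
  set φ : ℝ → ℝ := fun v => (1 - v ^ q) ^ P⁻¹ with hφdef
  set φ' : ℝ → ℝ := fun v => -(q * v ^ (q - 1)) * P⁻¹ * (1 - v ^ q) ^ (P⁻¹ - 1) with hφ'def
  have hvfacts : ∀ v ∈ Ioo (0:ℝ) s, 0 < v ^ q ∧ v ^ q < 1 := fun v hv =>
    ⟨Real.rpow_pos_of_pos hv.1 q,
      Real.rpow_lt_one hv.1.le (lt_of_lt_of_le hv.2 hs1) hq0⟩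
  -- derivative
  have hderiv : ∀ v ∈ Ioo (0:ℝ) s, HasDerivWithinAt φ (φ' v) (Ioo (0:ℝ) s) v := by
    intro v hv
    obtain ⟨h1, h2⟩ := hvfacts v hv
    have d1 : HasDerivAt (fun v : ℝ => v ^ q) (q * v ^ (q - 1)) v :=
      Real.hasDerivAt_rpow_const (Or.inl hv.1.ne')
    have d2 : HasDerivAt (fun v : ℝ => 1 - v ^ q) (-(q * v ^ (q - 1))) v := d1.const_sub 1
    have h3 : (0:ℝ) < 1 - v ^ q := by linarith
    have d3 := d2.rpow_const (p := P⁻¹) (Or.inl h3.ne')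
    exact d3.hasDerivWithinAt
  -- left inverse
  have hrec : ∀ v ∈ Ioo (0:ℝ) s, (1 - φ v ^ P) ^ q⁻¹ = v := by
    intro v hv
    obtain ⟨h1, h2⟩ := hvfacts v hv
    rw [hφdef]
    dsimp only
    rw [Real.rpow_inv_rpow (by linarith) hP0.ne', sub_sub_cancel,
      Real.rpow_rpow_inv hv.1.le hq0.ne']
  have hinj : InjOn φ (Ioo (0:ℝ) s) := fun v1 h1 v2 h2 h => by
    rw [← hrec v1 h1, ← hrec v2 h2, h]
  -- image
  have himg : φ '' Ioo (0:ℝ) s = Ioo ((1 - s ^ q) ^ P⁻¹) 1 := by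
    ext u
    simp only [mem_image, mem_Ioo]
    constructor
    · rintro ⟨v, ⟨hv0, hvs⟩, rfl⟩
      obtain ⟨h1, h2⟩ := hvfacts v ⟨hv0, hvs⟩
      have hvq : v ^ q < s ^ q := Real.rpow_lt_rpow hv0.le hvs hq0
      constructor
      · exact Real.rpow_lt_rpow (by linarith) (by linarith) (by positivity)
      · exact Real.rpow_lt_one (by linarith) (by linarith) (by positivity)
    · rintro ⟨htu, hu1⟩
      have hu0 : 0 < u := lt_of_le_of_lt (Real.rpow_nonneg (by linarith) _) htu
      have huP1 : u ^ P < 1 := Real.rpow_lt_one hu0.le hu1 hP0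
      have huP0 : 0 < u ^ P := Real.rpow_pos_of_pos hu0 P
      have htP : ((1 - s ^ q) ^ P⁻¹) ^ P = 1 - s ^ q :=
        Real.rpow_inv_rpow (by linarith) hP0.ne'
      have huPt : 1 - s ^ q < u ^ P := by
        calc 1 - s ^ q = ((1 - s ^ q) ^ P⁻¹) ^ P := htP.symm
        _ < u ^ P := Real.rpow_lt_rpow (Real.rpow_nonneg (by linarith) _) htu hP0
      refine ⟨(1 - u ^ P) ^ q⁻¹, ⟨Real.rpow_pos_of_pos (by linarith) _, ?_⟩, ?_⟩
      · calc (1 - u ^ P) ^ q⁻¹ < (s ^ q) ^ q⁻¹ :=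
              Real.rpow_lt_rpow (by linarith) (by linarith) (by positivity)
          _ = s := Real.rpow_rpow_inv hs0.le hq0.ne'
      · rw [hφdef]
        dsimp only
        rw [Real.rpow_inv_rpow (by linarith) hq0.ne', sub_sub_cancel,
          Real.rpow_rpow_inv hu0.le hP0.ne']
  -- pointwise identity for the transformed integrand
  have hpt : ∀ v ∈ Ioo (0:ℝ) s, |φ' v| • f (φ v) = (q / P) * (1 - v ^ q) ^ (-(1 / p)) := by
    intro v hv
    obtain ⟨h1, h2⟩ := hvfacts v hv
    have hfφ : f (φ v) = v ^ (1 - q) := by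
      rw [hfdef, hφdef]
      dsimp only
      rw [Real.rpow_inv_rpow (by linarith) hP0.ne', sub_sub_cancel,
        ← Real.rpow_mul hv.1.le]
      congr 1
      rw [hQdef]
      field_simp
      ring
    have habs : |φ' v| = q * v ^ (q - 1) * P⁻¹ * (1 - v ^ q) ^ (P⁻¹ - 1) := by
      have h3 : φ' v = -(q * v ^ (q - 1) * P⁻¹ * (1 - v ^ q) ^ (P⁻¹ - 1)) := by
        rw [hφ'def]; ring
      rw [h3, abs_neg, abs_of_nonneg]
      have := Real.rpow_nonneg hv.1.le (q - 1)
      have := Real.rpow_nonneg (by linarith : (0:ℝ) ≤ 1 - v ^ q) (P⁻¹ - 1)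
      positivity
    have hvv : v ^ (q - 1) * v ^ (1 - q) = 1 := by
      rw [← Real.rpow_add hv.1]
      norm_num
    have hexp : P⁻¹ - 1 = -(1 / p) := by
      rw [hPdef]
      field_simp
      ring
    rw [habs, hfφ, smul_eq_mul, hexp]
    calc q * v ^ (q - 1) * P⁻¹ * (1 - v ^ q) ^ (-(1/p)) * v ^ (1 - q)
        = q * P⁻¹ * (v ^ (q - 1) * v ^ (1 - q)) * (1 - v ^ q) ^ (-(1/p)) := by ring
      _ = q / P * (1 - v ^ q) ^ (-(1/p)) := by rw [hvv, div_eq_mul_inv]; ring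
  show (∫ u in Ioo ((1 - s ^ q) ^ P⁻¹) 1, f u) = q / P * ∫ u in Ioo (0:ℝ) s, (1 - u ^ q) ^ (-(1/p))
  rw [← himg, integral_image_eq_integral_abs_deriv_smul measurableSet_Ioo hderiv hinj f,
    setIntegral_congr_fun measurableSet_Ioo hpt, integral_const_mul]

/-- The duality formula `sin_{p,q}(π_{p,q} x/2) = cos_{q*,p*}^{q*−1}(π_{q*,p*}(1−x)/2)`
expressed in terms of the integrals `F_{p,q}` and `F_{q*,p*}`. -/
theorem duality_formula (p q : ℝ) (hp : 1 < p) (hq : 1 < q)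
    (s t : ℝ) (hs : s ∈ Set.Icc (0:ℝ) 1) (ht : t ∈ Set.Icc (0:ℝ) 1)
    (hst : s ^ q + t ^ (p / (p - 1)) = 1) :
    (∫ u in (0:ℝ)..t, (1 - u ^ (p / (p - 1))) ^ (-(1/(q / (q - 1)))))
      + (q / (p / (p - 1))) * ∫ u in (0:ℝ)..s, (1 - u ^ q) ^ (-(1/p))
      = ∫ u in (0:ℝ)..1, (1 - u ^ (p / (p - 1))) ^ (-(1/(q / (q - 1)))) := by
  have hp0 : (0:ℝ) < p := by linarith
  have hq0 : (0:ℝ) < q := by linarith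
  have hp1 : (0:ℝ) < p - 1 := by linarith
  have hq1 : (0:ℝ) < q - 1 := by linarith
  set P := p / (p - 1) with hPdef
  set Q := q / (q - 1) with hQdef
  have hP1 : (1:ℝ) < P := by
    rw [hPdef, lt_div_iff₀ hp1]
    linarith
  have hQ1 : (1:ℝ) < Q := by
    rw [hQdef, lt_div_iff₀ hq1]
    linarith
  have hP0 : (0:ℝ) < P := by linarith
  rcases eq_or_lt_of_le hs.1 with hs0 | hs0
  · -- s = 0, t = 1
    have hsq : s ^ q = 0 := by rw [← hs0, Real.zero_rpow hq0.ne']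
    have htP : t ^ P = 1 := by linarith
    have ht1 : t = 1 := by
      by_contra h
      have htlt : t < 1 := lt_of_le_of_ne ht.2 h
      have := Real.rpow_lt_one ht.1 htlt hP0
      rw [htP] at this
      exact lt_irrefl 1 this
    rw [← hs0, ht1]
    simp
  · -- 0 < s
    have hsq0 : 0 < s ^ q := Real.rpow_pos_of_pos hs0 q
    have htP : t ^ P = 1 - s ^ q := by linarith
    have ht' : t = (1 - s ^ q) ^ P⁻¹ := by
      rw [← htP, Real.rpow_rpow_inv ht.1 hP0.ne']
    have htlt1 : t < 1 := by
      by_contra h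
      push_neg at h
      have h2 : t = 1 := le_antisymm ht.2 h
      rw [h2, Real.one_rpow] at htP
      linarith
    -- integrability
    have hIf : IntegrableOn (fun u : ℝ => (1 - u ^ P) ^ (-(1 / Q))) (Ioo (0:ℝ) 1) :=
      aux_integrable hP1.le (by rw [neg_lt, neg_neg]; rw [div_lt_one (by linarith)]; linarith)
        (neg_nonpos_of_nonneg (by positivity))
    have hsub1 : Ioc (0:ℝ) t ⊆ Ioo (0:ℝ) 1 := fun x hx => ⟨hx.1, lt_of_le_of_lt hx.2 htlt1⟩
    have hsub2 : Ioo t 1 ⊆ Ioo (0:ℝ) 1 := fun x hx => ⟨lt_of_le_of_lt ht.1 hx.1, hx.2⟩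
    -- split the integral
    have hsplit : ∫ u in Ioo (0:ℝ) 1, (1 - u ^ P) ^ (-(1 / Q))
        = (∫ u in Ioc (0:ℝ) t, (1 - u ^ P) ^ (-(1 / Q)))
          + ∫ u in Ioo t 1, (1 - u ^ P) ^ (-(1 / Q)) := by
      rw [← Ioc_union_Ioo_eq_Ioo ht.1 htlt1]
      exact setIntegral_union (Ioc_disjoint_Ioi_same.mono_right Ioo_subset_Ioi_self)
        measurableSet_Ioo (hIf.mono_set hsub1) (hIf.mono_set hsub2)
    have hkey := key_subst p q s hp hq hs0 hs.2
    rw [← hPdef, ← hQdef, ← ht'] at hkey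
    rw [integral_Ioc_eq_integral_Ioo] at hsplit
    rw [intervalIntegral.integral_of_le ht.1, intervalIntegral.integral_of_le hs.1,
      intervalIntegral.integral_of_le zero_le_one]
    simp only [integral_Ioc_eq_integral_Ioo]
    rw [hsplit, hkey]
end

section
/- With k² := (2−√3)/4, one has ∫₀¹ (1−t⁶)^{−1/2} dt = 3^{−1/4} · ∫₀¹ ( (1−s²)(1 − k² s²) )^{−1/2} ds. (Equivalently, π_{2,6}/2 = K(k)/3^{1/4}, where K is the complete elliptic integral of the first kind with modulus k.) -/
open Real MeasureTheory intervalIntegral Set Filter Topology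

noncomputable section Pi26Aux

def pw (t : ℝ) : ℝ := Real.sqrt (1 + t^2 + t^4)
def pD (t : ℝ) : ℝ := 1 + (Real.sqrt 3 - 1) * t^2 + pw t
def pc : ℝ := Real.sqrt (2 * Real.sqrt 3)
def pPhi (t : ℝ) : ℝ := pc * t / Real.sqrt (pD t)
def pPhiD (t : ℝ) : ℝ := pc * (pw t + 1 + t^2/2) / (pw t * (pD t * Real.sqrt (pD t)))
def gI (s : ℝ) : ℝ := ((1 - s^2) * (1 - (2 - Real.sqrt 3)/4 * s^2)) ^ (-(1/2) : ℝ)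
def hI (t : ℝ) : ℝ := (1 - t^6) ^ (-(1/2) : ℝ)

lemma r_pos : (0:ℝ) < Real.sqrt 3 := Real.sqrt_pos.2 (by norm_num)
lemma r_sq : (Real.sqrt 3)^2 = 3 := Real.sq_sqrt (by norm_num)
lemma r_gt1 : (1:ℝ) < Real.sqrt 3 := by
  nlinarith [r_sq, r_pos]
lemma r_lt2 : Real.sqrt 3 < 2 := by nlinarith [r_sq, r_pos]

lemma pw_pos (t : ℝ) : 0 < pw t := Real.sqrt_pos.2 (by positivity)
lemma pw_sq (t : ℝ) : (pw t)^2 = 1 + t^2 + t^4 := Real.sq_sqrt (by positivity)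
lemma pD_pos (t : ℝ) : 0 < pD t := by
  have := pw_pos t; have := r_gt1
  unfold pD; nlinarith [sq_nonneg t]
lemma pc_sq : pc^2 = 2 * Real.sqrt 3 := Real.sq_sqrt (by positivity)
lemma pc_pos : 0 < pc := Real.sqrt_pos.2 (by positivity)

lemma sqrtD_pos (t : ℝ) : 0 < Real.sqrt (pD t) := Real.sqrt_pos.2 (pD_pos t)
lemma sqrtD_sq (t : ℝ) : (Real.sqrt (pD t))^2 = pD t := Real.sq_sqrt (pD_pos t).le

-- the key algebraic identity
lemma key_id (t : ℝ) :
    pD t * (pw t + 1 - (Real.sqrt 3 + 1) * t^2) = (1 - t^2) * (2 * pw t + 2 + t^2) := by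
  unfold pD
  linear_combination pw_sq t - t^4 * r_sq

lemma num_pos (t : ℝ) (h1 : t^2 < 1) : 0 < pw t + 1 - (Real.sqrt 3 + 1) * t^2 := by
  have h := key_id t
  have h2 : 0 < (1 - t^2) * (2 * pw t + 2 + t^2) := by
    have := pw_pos t; nlinarith [sq_nonneg t]
  nlinarith [pD_pos t]

lemma sq_pPhi (t : ℝ) : (pPhi t)^2 = 2 * Real.sqrt 3 * t^2 / pD t := by
  unfold pPhi
  rw [div_pow, mul_pow, pc_sq, sqrtD_sq]

lemma one_sub_sq_pPhi (t : ℝ) :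
    1 - (pPhi t)^2 = (pw t + 1 - (Real.sqrt 3 + 1) * t^2) / pD t := by
  rw [sq_pPhi]
  have hD := (pD_pos t).ne'
  field_simp
  unfold pD; ring

lemma k_fact (t : ℝ) :
    1 - (2 - Real.sqrt 3)/4 * (pPhi t)^2 = (pw t + 1 + t^2/2) / pD t := by
  rw [sq_pPhi]
  have hD := (pD_pos t).ne'
  field_simp
  unfold pD
  linear_combination (4*t^2) * r_sq

end Pi26Aux

section Deriv
lemma hasDerivAt_pw (t : ℝ) : HasDerivAt pw ((2*t + 4*t^3) / (2 * pw t)) t := by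
  have h : HasDerivAt (fun t:ℝ => 1 + t^2 + t^4) (2*t + 4*t^3) t := by
    have h2 := hasDerivAt_pow 2 t
    have h4 := hasDerivAt_pow 4 t
    convert (show HasDerivAt (fun t:ℝ => 1 + t^2 + t^4) _ t from (h2.const_add 1).add h4) using 1
    push_cast; ring
  exact h.sqrt (by positivity)

lemma hasDerivAt_pD (t : ℝ) :
    HasDerivAt pD (2*(Real.sqrt 3 - 1)*t + (2*t + 4*t^3) / (2 * pw t)) t := by
  have h : HasDerivAt (fun t:ℝ => 1 + (Real.sqrt 3 - 1)*t^2) (2*(Real.sqrt 3 - 1)*t) t := by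
    have h2 := (hasDerivAt_pow 2 t).const_mul (Real.sqrt 3 - 1)
    convert (show HasDerivAt (fun t:ℝ => 1 + (Real.sqrt 3 - 1)*t^2) _ t from h2.const_add 1) using 1
    push_cast; ring
  exact h.add (hasDerivAt_pw t)

lemma hasDerivAt_pPhi (t : ℝ) : HasDerivAt pPhi (pPhiD t) t := by
  have hd : HasDerivAt (fun t => Real.sqrt (pD t))
      ((2*(Real.sqrt 3 - 1)*t + (2*t + 4*t^3) / (2 * pw t)) / (2 * Real.sqrt (pD t))) t :=
    (hasDerivAt_pD t).sqrt (pD_pos t).ne'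
  have hnum : HasDerivAt (fun t : ℝ => pc * t) pc t := by
    simpa using (hasDerivAt_id t).const_mul pc
  have h : HasDerivAt pPhi _ t := hnum.div hd (sqrtD_pos t).ne'
  convert h using 1
  have hw := pw_sq t
  have hd2 := sqrtD_sq t
  have hw0 := (pw_pos t).ne'
  have hd0 := (sqrtD_pos t).ne'
  have hD0 := (pD_pos t).ne'
  have hDdef : pD t = 1 + (Real.sqrt 3 - 1)*t^2 + pw t := rfl
  unfold pPhiD
  field_simp
  linear_combination (2*pc*(2*(pw t+1)+t^2) - 4*pc*pD t*pw t) * hd2 + (-4*pc*pD t*pw t) * hDdef + (-4*pc*pD t) * hw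
end Deriv

lemma eq_of_sq {a b : ℝ} (ha : 0 ≤ a) (hb : 0 ≤ b) (h : a^2 = b^2) : a = b := by
  rw [← Real.sqrt_sq ha, h, Real.sqrt_sq hb]

lemma rpow_neg_half (x : ℝ) (hx : 0 ≤ x) : x ^ (-(1/2) : ℝ) = (Real.sqrt x)⁻¹ := by
  rw [Real.rpow_neg hx, Real.sqrt_eq_rpow]

lemma pPhiD_nonneg (t : ℝ) : 0 ≤ pPhiD t := by
  have h1 := pw_pos t; have h2 := pD_pos t; have h3 := sqrtD_pos t; have h4 := pc_pos
  have : 0 ≤ pw t + 1 + t^2/2 := by positivity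
  unfold pPhiD; positivity

lemma key_s7 (t : ℝ) (ht0 : 0 ≤ t) (ht1 : t < 1) :
    pPhiD t * gI (pPhi t) = (3:ℝ) ^ ((1/4) : ℝ) * hI t := by
  have hu1 : t^2 < 1 := by nlinarith
  have hA : 0 < pw t + 1 - (Real.sqrt 3 + 1) * t^2 := num_pos t hu1
  have hB : 0 < pw t + 1 + t^2/2 := by have := pw_pos t; positivity
  have hD := pD_pos t
  have hw := pw_pos t
  have hd := sqrtD_pos t
  have h16 : (0:ℝ) < 1 - t^6 := by nlinarith [pow_lt_one₀ ht0 ht1 (by norm_num : 6 ≠ 0)]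
  have hP : 0 < (1 - (pPhi t)^2) * (1 - (2 - Real.sqrt 3)/4 * (pPhi t)^2) := by
    rw [one_sub_sq_pPhi, k_fact]; positivity
  apply eq_of_sq
  · have : (0:ℝ) ≤ gI (pPhi t) := by
      unfold gI; positivity
    exact mul_nonneg (pPhiD_nonneg t) this
  · have : (0:ℝ) ≤ hI t := by unfold hI; positivity
    positivity
  · -- squares
    have hgsq : (gI (pPhi t))^2
        = ((1 - (pPhi t)^2) * (1 - (2 - Real.sqrt 3)/4 * (pPhi t)^2))⁻¹ := by
      unfold gI
      rw [rpow_neg_half _ hP.le, ← Real.sqrt_inv, Real.sq_sqrt (by positivity)]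
    have hhsq : (hI t)^2 = (1 - t^6)⁻¹ := by
      unfold hI
      rw [rpow_neg_half _ h16.le, ← Real.sqrt_inv, Real.sq_sqrt (by positivity)]
    have h34 : ((3:ℝ) ^ ((1/4) : ℝ))^2 = Real.sqrt 3 := by
      rw [← Real.rpow_natCast ((3:ℝ) ^ ((1/4):ℝ)) 2, ← Real.rpow_mul (by norm_num)]
      rw [Real.sqrt_eq_rpow]; norm_num
    rw [mul_pow, mul_pow, hgsq, hhsq, h34, one_sub_sq_pPhi, k_fact]
    have hkey := key_id t
    have hw2 := pw_sq t
    have hd2 := sqrtD_sq t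
    have hc2 := pc_sq
    have hDdef : pD t = 1 + (Real.sqrt 3 - 1)*t^2 + pw t := rfl
    have hDd : (pD t * Real.sqrt (pD t))^2 = (pD t)^3 := by rw [mul_pow, hd2]; ring
    have main : 2*Real.sqrt 3*(pw t + 1 + t^2/2)*(1 - t^6)
        = Real.sqrt 3*(pw t)^2*(pD t*(pw t + 1 - (Real.sqrt 3+1)*t^2)) := by
      linear_combination (Real.sqrt 3*(pw t)^2) * hkey
        + (-(Real.sqrt 3)*(2*pw t+2+t^2)*(1-t^2)) * hw2
        + ((-2:ℝ)*pw t^2*Real.sqrt 3^1 + (2:ℝ)*pw t^2*Real.sqrt 3^1*t^2 + (2:ℝ)*pw t^2*Real.sqrt 3^2*t^2 + (-2:ℝ)*pw t^3*Real.sqrt 3^1) * hDdef + ((-6:ℝ)*Real.sqrt 3^1*t^4 + (2:ℝ)*Real.sqrt 3^3*t^4 + (-2:ℝ)*pw t^2*Real.sqrt 3^1) * hw2 + ((2:ℝ)*Real.sqrt 3^1*t^4 + (2:ℝ)*Real.sqrt 3^1*t^6 + (2:ℝ)*Real.sqrt 3^1*t^8) * r_sq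
    unfold pPhiD
    rw [div_pow, mul_pow, mul_pow, hDd, hc2]
    have hA' : pw t + 1 - t^2 * (Real.sqrt 3 + 1) ≠ 0 := by rw [mul_comm]; exact hA.ne'
    field_simp
    linear_combination (-(pw t)^2) * hkey - (2*(pw t+1)+t^2)*(1-t^2) * hw2

lemma pPhi_zero : pPhi 0 = 0 := by unfold pPhi; simp

lemma pw_one : pw 1 = Real.sqrt 3 := by unfold pw; norm_num

lemma pPhi_one : pPhi 1 = 1 := by
  unfold pPhi pD
  rw [pw_one]
  have : 1 + (Real.sqrt 3 - 1) * (1:ℝ)^2 + Real.sqrt 3 = 2 * Real.sqrt 3 := by ring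
  rw [this]
  unfold pc
  rw [mul_one, div_self (by positivity)]

lemma pPhi_nonneg (t : ℝ) (ht : 0 ≤ t) : 0 ≤ pPhi t := by
  unfold pPhi
  have := sqrtD_pos t
  have := pc_pos
  positivity

lemma pPhi_lt_one (t : ℝ) (ht0 : 0 ≤ t) (ht1 : t < 1) : pPhi t < 1 := by
  have hu1 : t^2 < 1 := by nlinarith
  have h1 : 0 < 1 - (pPhi t)^2 := by
    rw [one_sub_sq_pPhi]
    exact div_pos (num_pos t hu1) (pD_pos t)
  nlinarith [pPhi_nonneg t ht0]

lemma pw_continuous : Continuous pw := by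
  apply Real.continuous_sqrt.comp
  continuity

lemma pD_continuous : Continuous pD := by
  unfold pD
  have := pw_continuous
  continuity

lemma sqrtD_continuous : Continuous (fun t => Real.sqrt (pD t)) :=
  Real.continuous_sqrt.comp pD_continuous

lemma pPhi_continuous : Continuous pPhi := by
  unfold pPhi
  exact (continuous_const.mul continuous_id).div sqrtD_continuous
    fun t => (sqrtD_pos t).ne'

lemma pPhiD_continuous : Continuous pPhiD := by
  unfold pPhiD
  refine Continuous.div ?_ ?_ fun t => ?_
  · exact continuous_const.mul ((pw_continuous.add continuous_const).add (by continuity))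
  · exact pw_continuous.mul (pD_continuous.mul sqrtD_continuous)
  · have := pw_pos t; have := pD_pos t; have := sqrtD_pos t; positivity

lemma gI_contOn : ContinuousOn gI (Ico (0:ℝ) 1) := by
  unfold gI
  apply ContinuousOn.rpow_const
  · fun_prop
  · rintro s ⟨hs0, hs1⟩
    left
    have h1 : 0 < 1 - s^2 := by nlinarith
    have h2 : 0 < 1 - (2 - Real.sqrt 3)/4 * s^2 := by nlinarith [r_pos]
    positivity

lemma cov_s7 (x : ℝ) (hx0 : 0 ≤ x) (hx1 : x < 1) :
    (∫ t in (0:ℝ)..x, hI t) = (3:ℝ)^(-(1/4):ℝ) * ∫ s in (0:ℝ)..pPhi x, gI s := by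
  have huIcc : uIcc (0:ℝ) x = Icc 0 x := uIcc_of_le hx0
  have hcov := integral_comp_smul_deriv' (f := pPhi) (f' := pPhiD) (g := gI) (a := 0) (b := x)
    (fun t _ => hasDerivAt_pPhi t) (pPhiD_continuous.continuousOn)
    (gI_contOn.mono ?_)
  swap
  · rintro y ⟨t, ht, rfl⟩
    rw [huIcc] at ht
    exact ⟨pPhi_nonneg t ht.1, pPhi_lt_one t ht.1 (lt_of_le_of_lt ht.2 hx1)⟩
  rw [pPhi_zero] at hcov
  have hcong : (∫ t in (0:ℝ)..x, pPhiD t • gI (pPhi t))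
      = ∫ t in (0:ℝ)..x, (3:ℝ)^((1/4):ℝ) * hI t := by
    apply integral_congr
    intro t ht
    rw [huIcc] at ht
    simpa [smul_eq_mul] using key_s7 t ht.1 (lt_of_le_of_lt ht.2 hx1)
  rw [show (fun t => pPhiD t • (gI ∘ pPhi) t) = fun t => pPhiD t • gI (pPhi t) from rfl] at hcov
  rw [hcong, intervalIntegral.integral_const_mul] at hcov
  rw [← hcov, ← mul_assoc, ← Real.rpow_add (by norm_num : (0:ℝ) < 3)]
  norm_num

lemma base_int : IntervalIntegrable (fun s : ℝ => (1-s)^(-(1/2):ℝ)) volume 0 1 := by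
  have h := intervalIntegrable_rpow' (a := (1:ℝ)) (b := 0) (r := -(1/2)) (by norm_num)
  have h2 := h.comp_sub_left 1
  norm_num at h2
  exact h2

lemma base_intOn : IntegrableOn (fun s : ℝ => (1-s)^(-(1/2):ℝ)) (Ioo (0:ℝ) 1) volume := by
  have := base_int
  rw [intervalIntegrable_iff, uIoc_of_le (by norm_num : (0:ℝ) ≤ 1)] at this
  exact this.mono_set Ioo_subset_Ioc_self

lemma hI_contOn : ContinuousOn hI (Ico (0:ℝ) 1) := by
  unfold hI
  apply ContinuousOn.rpow_const (by fun_prop)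
  rintro t ⟨ht0, ht1⟩
  left
  have : t^6 < 1 := pow_lt_one₀ ht0 ht1 (by norm_num)
  exact (by linarith : (0:ℝ) < 1 - t^6).ne'

lemma hI_int : IntervalIntegrable hI volume 0 1 := by
  rw [intervalIntegrable_iff, uIoc_of_le (by norm_num : (0:ℝ) ≤ 1),
    integrableOn_Ioc_iff_integrableOn_Ioo]
  refine MeasureTheory.Integrable.mono base_intOn ((hI_contOn.mono ?_).aestronglyMeasurable measurableSet_Ioo) ?_
  · exact fun t ht => ⟨ht.1.le, ht.2⟩
  refine (ae_restrict_iff' measurableSet_Ioo).2 (ae_of_all _ fun t ht => ?_)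
  have h6 : t^6 ≤ t := by
    have h5 : t^5 ≤ 1 := pow_le_one₀ ht.1.le ht.2.le
    nlinarith [mul_nonneg ht.1.le (sub_nonneg.2 h5)]
  have h1 : (0:ℝ) < 1 - t := by linarith [ht.2]
  unfold hI
  rw [Real.norm_of_nonneg (Real.rpow_nonneg (by nlinarith) _),
    Real.norm_of_nonneg (Real.rpow_nonneg (by linarith) _)]
  exact Real.rpow_le_rpow_of_nonpos h1 (show (1:ℝ)-t ≤ 1-t^6 by linarith) (by norm_num)

lemma half_rpow : ((1/2:ℝ))^(-(1/2):ℝ) = Real.sqrt 2 := by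
  rw [Real.sqrt_eq_rpow, show (1/2:ℝ) = 2⁻¹ from by norm_num,
    Real.inv_rpow (by norm_num), ← Real.rpow_neg (by norm_num), neg_neg]

lemma gI_int : IntervalIntegrable gI volume 0 1 := by
  rw [intervalIntegrable_iff, uIoc_of_le (by norm_num : (0:ℝ) ≤ 1),
    integrableOn_Ioc_iff_integrableOn_Ioo]
  refine (MeasureTheory.Integrable.mono (base_intOn.const_mul (Real.sqrt 2))
    ((gI_contOn.mono ?_).aestronglyMeasurable measurableSet_Ioo) ?_)
  · exact fun t ht => ⟨ht.1.le, ht.2⟩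
  refine (ae_restrict_iff' measurableSet_Ioo).2 (ae_of_all _ fun s hs => ?_)
  obtain ⟨hs0, hs1⟩ := hs
  have hs2 : s^2 ≤ 1 := by nlinarith
  have hP : (1-s)/2 ≤ (1 - s^2) * (1 - (2 - Real.sqrt 3)/4 * s^2) := by
    have h1 : 1-s ≤ 1-s^2 := by nlinarith
    have h2 : (1:ℝ)/2 ≤ 1 - (2-Real.sqrt 3)/4*s^2 := by nlinarith [r_gt1]
    calc (1-s)/2 = (1-s)*(1/2) := by ring
      _ ≤ (1-s^2)*(1 - (2-Real.sqrt 3)/4*s^2) := mul_le_mul h1 h2 (by norm_num) (by nlinarith)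
  have hpos : (0:ℝ) < (1-s)/2 := by linarith
  have hb : gI s ≤ ((1-s)/2)^(-(1/2):ℝ) :=
    Real.rpow_le_rpow_of_nonpos hpos hP (by norm_num)
  have heq : ((1-s)/2)^(-(1/2):ℝ) = Real.sqrt 2 * (1-s)^(-(1/2):ℝ) := by
    rw [show (1-s)/2 = (1/2:ℝ)*(1-s) by ring,
      Real.mul_rpow (by norm_num) (by linarith), half_rpow]
  have hgnn : 0 ≤ gI s := Real.rpow_nonneg (by nlinarith [r_pos, r_lt2, sq_nonneg s]) _
  rw [Real.norm_of_nonneg hgnn, Real.norm_of_nonneg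
    (mul_nonneg (Real.sqrt_nonneg 2) (Real.rpow_nonneg (by linarith) _)), ← heq]
  exact hb


/-- `π_{2,6}/2 = K(k)/3^{1/4}` with modulus `k² = (2−√3)/4`. -/
theorem pi26_eq_elliptic :
    (∫ t in (0:ℝ)..1, (1 - t ^ 6) ^ (-(1/2) : ℝ))
      = (3:ℝ) ^ (-(1/4) : ℝ)
        * ∫ s in (0:ℝ)..1, ((1 - s ^ 2) * (1 - (2 - Real.sqrt 3)/4 * s ^ 2)) ^ (-(1/2) : ℝ) := by
  show (∫ t in (0:ℝ)..1, hI t) = (3:ℝ) ^ (-(1/4) : ℝ) * ∫ s in (0:ℝ)..1, gI s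
  set l : Filter ℝ := 𝓝[Ico (0:ℝ) 1] 1 with hl
  have hne : l.NeBot := by
    rw [hl]
    refine mem_closure_iff_nhdsWithin_neBot.1 ?_
    rw [closure_Ico (by norm_num : (0:ℝ) ≠ 1)]
    exact ⟨by norm_num, le_refl 1⟩
  have h1mem : (1:ℝ) ∈ Icc (0:ℝ) 1 := ⟨by norm_num, le_refl 1⟩
  -- continuity of primitives
  have hFcont : ContinuousOn (fun x => ∫ t in (0:ℝ)..x, hI t) (Icc (0:ℝ) 1) := by
    have := continuousOn_primitive_interval' (μ := volume) (f := hI) (b₁ := 0) (b₂ := 1)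
      hI_int left_mem_uIcc
    rwa [uIcc_of_le (by norm_num : (0:ℝ) ≤ 1)] at this
  have hGcont : ContinuousOn (fun y => ∫ s in (0:ℝ)..y, gI s) (Icc (0:ℝ) 1) := by
    have := continuousOn_primitive_interval' (μ := volume) (f := gI) (b₁ := 0) (b₂ := 1)
      gI_int left_mem_uIcc
    rwa [uIcc_of_le (by norm_num : (0:ℝ) ≤ 1)] at this
  have hF : Tendsto (fun x => ∫ t in (0:ℝ)..x, hI t) l (𝓝 (∫ t in (0:ℝ)..1, hI t)) := by
    have := (hFcont 1 h1mem).tendsto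
    exact this.mono_left (nhdsWithin_mono 1 Ico_subset_Icc_self)
  have hphi : Tendsto pPhi l (𝓝[Icc (0:ℝ) 1] 1) := by
    rw [tendsto_nhdsWithin_iff]
    constructor
    · have : Tendsto pPhi (𝓝 1) (𝓝 (pPhi 1)) := pPhi_continuous.tendsto 1
      rw [pPhi_one] at this
      exact this.mono_left nhdsWithin_le_nhds
    · filter_upwards [self_mem_nhdsWithin] with x hx
      exact ⟨pPhi_nonneg x hx.1, (pPhi_lt_one x hx.1 hx.2).le⟩
  have hG : Tendsto (fun x => (3:ℝ)^(-(1/4):ℝ) * ∫ s in (0:ℝ)..pPhi x, gI s) l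
      (𝓝 ((3:ℝ)^(-(1/4):ℝ) * ∫ s in (0:ℝ)..1, gI s)) :=
    (((hGcont 1 h1mem).tendsto.comp hphi).const_mul _)
  have heq : (fun x => ∫ t in (0:ℝ)..x, hI t)
      =ᶠ[l] fun x => (3:ℝ)^(-(1/4):ℝ) * ∫ s in (0:ℝ)..pPhi x, gI s := by
    filter_upwards [self_mem_nhdsWithin] with x hx
    exact cov_s7 x hx.1 hx.2
  exact tendsto_nhds_unique hF (hG.congr' heq.symm)
end

section
/- Let F(x) := ∫₀ˣ (1−t⁶)^{−1/2} dt. For every V ∈ [0,1], F( √( (1−V²)/(1+2V²) ) ) = F(1) − F(V). (This is the complementary-angle formula sin_{2,6}(π_{2,6}/2 − v) = √((1 − sin_{2,6}²v)/(1 + 2 sin_{2,6}²v)).) -/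
open Real MeasureTheory Set intervalIntegral

namespace CompSin26

noncomputable def f26 (t : ℝ) : ℝ := (1 - t ^ 6) ^ (-(1/2) : ℝ)

lemma f26_meas : Measurable f26 := by unfold f26; measurability

lemma rpow_neg_half (x : ℝ) (hx : 0 ≤ x) : x ^ (-(1/2) : ℝ) = (Real.sqrt x)⁻¹ := by
  rw [Real.rpow_neg hx, Real.sqrt_eq_rpow]

lemma f26_int : IntervalIntegrable f26 volume 0 1 := by
  have hg : IntervalIntegrable (fun x : ℝ => (1 - x) ^ (-(1/2) : ℝ)) volume 0 1 := by
    have := (intervalIntegrable_rpow' (a := 0) (b := 1)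
      (r := (-(1/2) : ℝ)) (by norm_num)).comp_sub_left 1
    simpa using this.symm
  refine hg.mono_fun f26_meas.aestronglyMeasurable ?_
  filter_upwards [ae_restrict_mem measurableSet_uIoc] with t ht
  rw [Set.uIoc_of_le (zero_le_one (α := ℝ))] at ht
  have ht0 : (0:ℝ) < t := ht.1
  have ht1 : t ≤ 1 := ht.2
  have h6 : t ^ 6 ≤ 1 := pow_le_one₀ (le_of_lt ht0) ht1
  have hb0 : (0:ℝ) ≤ 1 - t ^ 6 := by linarith
  have hf0 : (0:ℝ) ≤ f26 t := Real.rpow_nonneg hb0 _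
  have hg0 : (0:ℝ) ≤ (1 - t) ^ (-(1/2) : ℝ) := Real.rpow_nonneg (by linarith) _
  rw [Real.norm_of_nonneg hf0, Real.norm_of_nonneg hg0]
  rcases eq_or_lt_of_le ht1 with h | h
  · subst h
    simp [f26, Real.zero_rpow (by norm_num : (-(1/2):ℝ) ≠ 0)]
  · have hle : 1 - t ≤ 1 - t ^ 6 := by
      have : t ^ 6 ≤ t := by
        calc t ^ 6 ≤ t ^ 1 := pow_le_pow_of_le_one (le_of_lt ht0) ht1 (by norm_num)
        _ = t := pow_one t
      linarith
    exact Real.rpow_le_rpow_of_nonpos (by linarith) hle (by norm_num)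

lemma F26_cont : ContinuousOn F26 (Icc (0:ℝ) 1) := by
  have := continuousOn_primitive_interval' f26_int
    (by rw [Set.uIcc_of_le (zero_le_one (α := ℝ))]; exact Set.left_mem_Icc.2 zero_le_one)
  rw [Set.uIcc_of_le (zero_le_one (α := ℝ))] at this
  exact this

lemma F26_deriv {x : ℝ} (hx : x ∈ Ioo (0:ℝ) 1) :
    HasDerivAt F26 ((1 - x ^ 6) ^ (-(1/2) : ℝ)) x := by
  have hint : IntervalIntegrable f26 volume 0 x :=
    f26_int.mono_set' (by
      rw [Set.uIoc_of_le (le_of_lt hx.1), Set.uIoc_of_le (zero_le_one (α := ℝ))]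
      exact Set.Ioc_subset_Ioc_right (le_of_lt hx.2))
  have hmeas : StronglyMeasurableAtFilter f26 (nhds x) :=
    ⟨Set.univ, Filter.univ_mem, f26_meas.aestronglyMeasurable⟩
  have hne : (1 : ℝ) - x ^ 6 ≠ 0 := by nlinarith [hx.1, hx.2, pow_lt_one₀ (le_of_lt hx.1) hx.2 (by norm_num : (6:ℕ) ≠ 0)]
  have hcont : ContinuousAt f26 x := by
    exact ((continuous_const.sub (continuous_pow 6)).continuousAt).rpow_const (Or.inl hne)
  exact intervalIntegral.integral_hasDerivAt_right hint hmeas hcont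

lemma key_algebra {v : ℝ} (hv0 : 0 < v) (hv1 : v < 1) :
    (1 - Real.sqrt ((1 - v ^ 2) / (1 + 2 * v ^ 2)) ^ 6) ^ (-(1/2) : ℝ) *
      (-6 * v / (1 + 2 * v ^ 2) ^ 2 / (2 * Real.sqrt ((1 - v ^ 2) / (1 + 2 * v ^ 2)))) +
      (1 - v ^ 6) ^ (-(1/2) : ℝ) = 0 := by
  have hA : (0:ℝ) < 1 + 2 * v ^ 2 := by positivity
  have hB : (0:ℝ) < 1 - v ^ 2 := by nlinarith
  have hC : (0:ℝ) < 1 + v ^ 2 + v ^ 4 := by positivity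
  have hw : (0:ℝ) < (1 - v ^ 2) / (1 + 2 * v ^ 2) := div_pos hB hA
  have hsq : Real.sqrt ((1 - v ^ 2) / (1 + 2 * v ^ 2)) ^ 2 = (1 - v ^ 2) / (1 + 2 * v ^ 2) :=
    Real.sq_sqrt (le_of_lt hw)
  have hw6 : Real.sqrt ((1 - v ^ 2) / (1 + 2 * v ^ 2)) ^ 6
      = ((1 - v ^ 2) / (1 + 2 * v ^ 2)) ^ 3 := by
    rw [show (6:ℕ) = 2 * 3 from rfl, pow_mul, hsq]
  have h1mw : 1 - ((1 - v ^ 2) / (1 + 2 * v ^ 2)) ^ 3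
      = 9 * v ^ 2 * (1 + v ^ 2 + v ^ 4) / (1 + 2 * v ^ 2) ^ 3 := by
    field_simp
    ring
  have h16 : 1 - v ^ 6 = (1 - v ^ 2) * (1 + v ^ 2 + v ^ 4) := by ring
  rw [hw6, h1mw, h16]
  have e1 : (9 * v ^ 2 * (1 + v ^ 2 + v ^ 4) / (1 + 2 * v ^ 2) ^ 3) ^ (-(1/2) : ℝ)
      = ((1 + 2 * v ^ 2) * Real.sqrt (1 + 2 * v ^ 2)) / (3 * v * Real.sqrt (1 + v ^ 2 + v ^ 4)) := by
    rw [CompSin26.rpow_neg_half _ (by positivity)]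
    rw [show 9 * v ^ 2 * (1 + v ^ 2 + v ^ 4) / (1 + 2 * v ^ 2) ^ 3
        = (3 * v) ^ 2 * (1 + v ^ 2 + v ^ 4) / ((1 + 2 * v ^ 2) ^ 2 * (1 + 2 * v ^ 2)) by ring]
    rw [Real.sqrt_div' _ (by positivity), Real.sqrt_mul (by positivity), Real.sqrt_mul (by positivity),
      Real.sqrt_sq (by positivity), Real.sqrt_sq (by positivity)]
    rw [inv_div]
  have e2 : ((1 - v ^ 2) * (1 + v ^ 2 + v ^ 4)) ^ (-(1/2) : ℝ)
      = (Real.sqrt (1 - v ^ 2) * Real.sqrt (1 + v ^ 2 + v ^ 4))⁻¹ := by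
    rw [CompSin26.rpow_neg_half _ (by positivity), Real.sqrt_mul (le_of_lt hB)]
  have e3 : Real.sqrt ((1 - v ^ 2) / (1 + 2 * v ^ 2))
      = Real.sqrt (1 - v ^ 2) / Real.sqrt (1 + 2 * v ^ 2) := Real.sqrt_div (le_of_lt hB) _
  rw [e1, e2, e3]
  have sA : (0:ℝ) < Real.sqrt (1 + 2 * v ^ 2) := Real.sqrt_pos.2 hA
  have sB : (0:ℝ) < Real.sqrt (1 - v ^ 2) := Real.sqrt_pos.2 hB
  have sC : (0:ℝ) < Real.sqrt (1 + v ^ 2 + v ^ 4) := Real.sqrt_pos.2 hC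
  have hA2 : Real.sqrt (1 + 2 * v ^ 2) ^ 2 = 1 + 2 * v ^ 2 := Real.sq_sqrt (le_of_lt hA)
  field_simp
  linear_combination (-6) * hA2

lemma G_deriv {v : ℝ} (hv : v ∈ Ioo (0:ℝ) 1) :
    HasDerivAt (fun w => F26 (Real.sqrt ((1 - w ^ 2) / (1 + 2 * w ^ 2))) + F26 w) 0 v := by
  obtain ⟨hv0, hv1⟩ := hv
  have hA : (0:ℝ) < 1 + 2 * v ^ 2 := by positivity
  have hB : (0:ℝ) < 1 - v ^ 2 := by nlinarith
  have hw : (0:ℝ) < (1 - v ^ 2) / (1 + 2 * v ^ 2) := div_pos hB hA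
  have h1 : HasDerivAt (fun w : ℝ => 1 - w ^ 2) (0 - 2 * v ^ 1) v :=
    (hasDerivAt_const v (1:ℝ)).sub (by simpa using hasDerivAt_pow 2 v)
  have h2 : HasDerivAt (fun w : ℝ => 1 + 2 * w ^ 2) (0 + 2 * (2 * v ^ 1)) v :=
    (hasDerivAt_const v (1:ℝ)).add ((hasDerivAt_pow 2 v).const_mul 2)
  have hu : HasDerivAt (fun w : ℝ => (1 - w ^ 2) / (1 + 2 * w ^ 2))
      (-6 * v / (1 + 2 * v ^ 2) ^ 2) v := by
    have := h1.div h2 (ne_of_gt hA)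
    refine this.congr_deriv ?_
    ring
  have hφ : HasDerivAt (fun w : ℝ => Real.sqrt ((1 - w ^ 2) / (1 + 2 * w ^ 2)))
      (-6 * v / (1 + 2 * v ^ 2) ^ 2 / (2 * Real.sqrt ((1 - v ^ 2) / (1 + 2 * v ^ 2)))) v :=
    hu.sqrt (ne_of_gt hw)
  have hφ_mem : Real.sqrt ((1 - v ^ 2) / (1 + 2 * v ^ 2)) ∈ Ioo (0:ℝ) 1 := by
    constructor
    · exact Real.sqrt_pos.2 hw
    · rw [Real.sqrt_lt' one_pos, one_pow, div_lt_one hA]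
      nlinarith
  have hF1 := CompSin26.F26_deriv hφ_mem
  have hF2 := CompSin26.F26_deriv ⟨hv0, hv1⟩
  have hcomp := hF1.comp v hφ
  have htot := hcomp.add hF2
  have hkey := key_algebra hv0 hv1
  rw [hkey] at htot
  exact htot

end CompSin26

/-- The complementary-angle formula
`sin_{2,6}(π_{2,6}/2 − v) = √((1 − sin_{2,6}² v)/(1 + 2 sin_{2,6}² v))`. -/
theorem complementary_angle_sin_two_six (V : ℝ) (hV : V ∈ Set.Icc (0:ℝ) 1) :
    F26 (Real.sqrt ((1 - V ^ 2) / (1 + 2 * V ^ 2))) = F26 1 - F26 V := by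
  set G : ℝ → ℝ := fun w => F26 (Real.sqrt ((1 - w ^ 2) / (1 + 2 * w ^ 2))) + F26 w with hG_def
  have hden : ∀ v : ℝ, (0:ℝ) < 1 + 2 * v ^ 2 := fun v => by positivity
  have hφ_cont : Continuous fun w : ℝ => Real.sqrt ((1 - w ^ 2) / (1 + 2 * w ^ 2)) := by
    apply Real.continuous_sqrt.comp
    exact (continuous_const.sub (continuous_pow 2)).div
      (continuous_const.add (continuous_const.mul (continuous_pow 2))) fun v => ne_of_gt (hden v)
  have hφ_mem : Set.MapsTo (fun w : ℝ => Real.sqrt ((1 - w ^ 2) / (1 + 2 * w ^ 2)))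
      (Set.Icc (0:ℝ) 1) (Set.Icc (0:ℝ) 1) := by
    intro v hv
    refine ⟨Real.sqrt_nonneg _, Real.sqrt_le_one.2 ?_⟩
    rw [div_le_one (hden v)]
    nlinarith [hv.1, hv.2]
  have hG_cont : ContinuousOn G (Set.Icc (0:ℝ) 1) :=
    (CompSin26.F26_cont.comp hφ_cont.continuousOn hφ_mem).add CompSin26.F26_cont
  have hG_diff : DifferentiableOn ℝ G (interior (Set.Icc (0:ℝ) 1)) := by
    rw [interior_Icc]
    exact fun x hx => (CompSin26.G_deriv hx).differentiableAt.differentiableWithinAt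
  have hG_deriv0 : ∀ x ∈ interior (Set.Icc (0:ℝ) 1), deriv G x = 0 := by
    rw [interior_Icc]
    exact fun x hx => (CompSin26.G_deriv hx).deriv
  have hmono : MonotoneOn G (Set.Icc (0:ℝ) 1) :=
    monotoneOn_of_deriv_nonneg (convex_Icc 0 1) hG_cont hG_diff
      (fun x hx => le_of_eq (hG_deriv0 x hx).symm)
  have hanti : AntitoneOn G (Set.Icc (0:ℝ) 1) :=
    antitoneOn_of_deriv_nonpos (convex_Icc 0 1) hG_cont hG_diff
      (fun x hx => le_of_eq (hG_deriv0 x hx))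
  have h0mem : (0:ℝ) ∈ Set.Icc (0:ℝ) 1 := Set.left_mem_Icc.2 zero_le_one
  have hGV : G V = G 0 :=
    le_antisymm (hanti h0mem hV hV.1) (hmono h0mem hV hV.1)
  have hG0 : G 0 = F26 1 := by
    simp [hG_def, F26, intervalIntegral.integral_same]
  have := hGV.trans hG0
  simp only [hG_def] at this
  linarith
end

section
/- Let F(x) := ∫₀ˣ (1−t⁶)^{−1/2} dt and let s := ((3√3−5)/4)^{1/6}. Then F(s) = F(1)/2. (Equivalently, sin_{2,6}⁶(π_{2,6}/4) = (3√3−5)/4.) -/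
open Set MeasureTheory intervalIntegral

namespace Sin26Aux

noncomputable def f (t : ℝ) : ℝ := (1 - t ^ 6) ^ (-(1/2) : ℝ)

noncomputable def φ (x : ℝ) : ℝ := Real.sqrt ((1 - x ^ 2) / (1 + 2 * x ^ 2))

lemma f_meas : Measurable f := by
  unfold f
  fun_prop

lemma f_int : IntervalIntegrable f volume 0 1 := by
  have hg : IntervalIntegrable (fun t : ℝ => (1 - t) ^ (-(1/2) : ℝ)) volume 0 1 := by
    have h := (intervalIntegrable_rpow' (r := (-(1/2) : ℝ)) (by norm_num)
      (a := (0:ℝ)) (b := (1:ℝ))).comp_sub_left 1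
    simpa using h.symm
  refine hg.mono_fun' f_meas.aestronglyMeasurable ?_
  filter_upwards [ae_restrict_mem measurableSet_uIoc] with t ht
  rw [uIoc_of_le (by norm_num : (0:ℝ) ≤ 1)] at ht
  obtain ⟨h0, h1⟩ := ht
  have ht6 : t ^ 6 ≤ t := by
    calc t ^ 6 ≤ t ^ 1 := pow_le_pow_of_le_one h0.le h1 (by norm_num)
    _ = t := pow_one t
  have h16 : (0:ℝ) ≤ 1 - t ^ 6 := by linarith
  have hle : 1 - t ≤ 1 - t ^ 6 := by linarith
  unfold f
  rw [Real.norm_eq_abs, abs_of_nonneg (Real.rpow_nonneg h16 _)]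
  rcases eq_or_lt_of_le (by linarith : (0:ℝ) ≤ 1 - t) with h | h
  · rw [← h, Real.zero_rpow (by norm_num)]
    have ht1 : t = 1 := by linarith
    rw [ht1]
    norm_num
  · exact Real.rpow_le_rpow_of_nonpos h hle (by norm_num)

lemma f_contAt {x : ℝ} (hx : x ∈ Ioo (0:ℝ) 1) : ContinuousAt f x := by
  have h6 : x ^ 6 < 1 := pow_lt_one₀ (le_of_lt hx.1) hx.2 (by norm_num)
  have hne : 1 - x ^ 6 ≠ 0 := by
    have : 0 < 1 - x ^ 6 := by linarith
    exact this.ne'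
  exact ((continuous_const.sub (continuous_pow 6)).continuousAt).rpow_const (Or.inl hne)

lemma F_hasDerivAt {x : ℝ} (hx : x ∈ Ioo (0:ℝ) 1) : HasDerivAt F26 (f x) x := by
  have hint : IntervalIntegrable f volume 0 x :=
    f_int.mono_set' (by
      rw [uIoc_of_le hx.1.le, uIoc_of_le (by norm_num : (0:ℝ) ≤ 1)]
      exact Ioc_subset_Ioc le_rfl hx.2.le)
  have h := integral_hasDerivAt_right hint
    f_meas.aestronglyMeasurable.stronglyMeasurableAtFilter (f_contAt hx)
  unfold F26
  unfold f at h ⊢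
  exact h

lemma F_contOn : ContinuousOn F26 (Icc (0:ℝ) 1) := by
  have hi : IntegrableOn f (uIcc (0:ℝ) 1) volume := by
    rw [uIcc_of_le (by norm_num : (0:ℝ) ≤ 1)]
    rw [integrableOn_Icc_iff_integrableOn_Ioc]
    exact f_int.1
  have h := continuousOn_primitive_interval (f := f) (a := (0:ℝ)) (b := 1) (μ := volume) hi
  rw [uIcc_of_le (by norm_num : (0:ℝ) ≤ 1)] at h
  unfold F26
  unfold f at h
  exact h

lemma φ_mem {x : ℝ} (hx : x ∈ Ioo (0:ℝ) 1) : φ x ∈ Ioo (0:ℝ) 1 := by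
  have h1 : 0 < 1 - x ^ 2 := by nlinarith [hx.1, hx.2]
  have h2 : 0 < 1 + 2 * x ^ 2 := by positivity
  unfold φ
  constructor
  · exact Real.sqrt_pos.2 (div_pos h1 h2)
  · rw [Real.sqrt_lt' one_pos, one_pow, div_lt_one h2]
    nlinarith [hx.1]

lemma φ_cont : Continuous φ := by
  unfold φ
  apply Real.continuous_sqrt.comp
  apply Continuous.div (by continuity) (by continuity)
  intro x; positivity

lemma φ_maps : MapsTo φ (Icc (0:ℝ) 1) (Icc (0:ℝ) 1) := by
  intro x hx
  unfold φ
  constructor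
  · exact Real.sqrt_nonneg _
  · rw [Real.sqrt_le_one, div_le_one (by positivity)]
    nlinarith [hx.1]

lemma φ_hasDerivAt {x : ℝ} (hx : x ∈ Ioo (0:ℝ) 1) :
    HasDerivAt φ ((-6 * x / (1 + 2 * x ^ 2) ^ 2) /
      (2 * Real.sqrt ((1 - x ^ 2) / (1 + 2 * x ^ 2)))) x := by
  have h1 : 0 < 1 - x ^ 2 := by nlinarith [hx.1, hx.2]
  have h2 : 0 < 1 + 2 * x ^ 2 := by positivity
  have hnum : HasDerivAt (fun y : ℝ => 1 - y ^ 2) (-(2 * x)) x := by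
    simpa using (hasDerivAt_pow 2 x).const_sub 1
  have hden : HasDerivAt (fun y : ℝ => 1 + 2 * y ^ 2) (2 * (2 * x)) x := by
    simpa using ((hasDerivAt_pow 2 x).const_mul 2).const_add 1
  have hg : HasDerivAt (fun y : ℝ => (1 - y ^ 2) / (1 + 2 * y ^ 2))
      (-6 * x / (1 + 2 * x ^ 2) ^ 2) x := by
    have h := hnum.div hden h2.ne'
    refine h.congr_deriv ?_
    ring
  have h := hg.sqrt (by positivity)
  unfold φ
  exact h

lemma cancel {x : ℝ} (hx : x ∈ Ioo (0:ℝ) 1) :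
    f (φ x) * ((-6 * x / (1 + 2 * x ^ 2) ^ 2) /
      (2 * Real.sqrt ((1 - x ^ 2) / (1 + 2 * x ^ 2)))) = -(f x) := by
  obtain ⟨hx0, hx1⟩ := hx
  set A := 1 - x ^ 2 with hA_def
  set B := 1 + 2 * x ^ 2 with hB_def
  set C := 1 + x ^ 2 + x ^ 4 with hC_def
  have hA : 0 < A := by rw [hA_def]; nlinarith
  have hB : 0 < B := by rw [hB_def]; positivity
  have hC : 0 < C := by rw [hC_def]; positivity
  have hg_pos : 0 < A / B := div_pos hA hB
  have hφ6 : φ x ^ 6 = (A / B) ^ 3 := by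
    unfold φ
    rw [show (6:ℕ) = 2 * 3 from rfl, pow_mul, Real.sq_sqrt hg_pos.le]
  have h2 : 1 - φ x ^ 6 = 9 * x ^ 2 * C / B ^ 3 := by
    rw [hφ6, hA_def, hB_def, hC_def]
    field_simp
    ring
  have h3 : 1 - x ^ 6 = A * C := by rw [hA_def, hC_def]; ring
  have hq : (0:ℝ) < 9 * x ^ 2 * C / B ^ 3 := by positivity
  have hf1 : f (φ x) = (Real.sqrt (9 * x ^ 2 * C / B ^ 3))⁻¹ := by
    rw [f, h2, Real.rpow_neg hq.le, Real.sqrt_eq_rpow]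
  have hf2 : f x = (Real.sqrt (A * C))⁻¹ := by
    rw [f, h3, Real.rpow_neg (by positivity), Real.sqrt_eq_rpow]
  rw [hf1, hf2]
  set S1 := Real.sqrt (9 * x ^ 2 * C / B ^ 3) with hS1_def
  set S2 := Real.sqrt (A / B) with hS2_def
  set S3 := Real.sqrt (A * C) with hS3_def
  have hS1 : 0 < S1 := Real.sqrt_pos.2 hq
  have hS2 : 0 < S2 := Real.sqrt_pos.2 hg_pos
  have hS3 : 0 < S3 := Real.sqrt_pos.2 (by positivity)
  have hkey : S1 * S2 = (3 * x / B ^ 2) * S3 := by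
    rw [hS1_def, hS2_def, hS3_def, ← Real.sqrt_mul hq.le]
    rw [show 9 * x ^ 2 * C / B ^ 3 * (A / B) = (3 * x / B ^ 2) ^ 2 * (A * C) by
      field_simp; ring]
    rw [Real.sqrt_mul (sq_nonneg _), Real.sqrt_sq (by positivity)]
  have hstep : S1⁻¹ * ((-6 * x / B ^ 2) / (2 * S2)) = (-6 * x / B ^ 2) / (2 * (S1 * S2)) := by
    field_simp
  rw [hstep, hkey]
  rw [div_eq_iff (by positivity : (0:ℝ) < 2 * (3 * x / B ^ 2 * S3)).ne']
  field_simp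
  ring

noncomputable def H (x : ℝ) : ℝ := F26 x + F26 (φ x)

lemma H_hasDerivAt {x : ℝ} (hx : x ∈ Ioo (0:ℝ) 1) : HasDerivAt H 0 x := by
  have h1 := F_hasDerivAt hx
  have h2 := F_hasDerivAt (φ_mem hx)
  have h3 := φ_hasDerivAt hx
  have h4 : HasDerivAt (fun y => F26 (φ y))
      (f (φ x) * ((-6 * x / (1 + 2 * x ^ 2) ^ 2) /
        (2 * Real.sqrt ((1 - x ^ 2) / (1 + 2 * x ^ 2))))) x := h2.comp x h3
  have h5 := h1.add h4
  rw [cancel hx] at h5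
  rw [add_neg_cancel] at h5
  exact h5

lemma H_contOn : ContinuousOn H (Icc (0:ℝ) 1) :=
  F_contOn.add (F_contOn.comp φ_cont.continuousOn φ_maps)

lemma H_const {x : ℝ} (hx : x ∈ Icc (0:ℝ) 1) : H x = H 0 := by
  have hd : ∀ y ∈ interior (Icc (0:ℝ) 1),
      HasDerivWithinAt H ((fun _ => (0:ℝ)) y) (interior (Icc (0:ℝ) 1)) y := by
    intro y hy
    rw [interior_Icc] at hy
    exact (H_hasDerivAt hy).hasDerivWithinAt
  have hmono := monotoneOn_of_hasDerivWithinAt_nonneg (convex_Icc 0 1) H_contOn hd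
    (fun y _ => le_rfl)
  have hanti := antitoneOn_of_hasDerivWithinAt_nonpos (convex_Icc 0 1) H_contOn hd
    (fun y _ => le_rfl)
  have h0 : (0:ℝ) ∈ Icc (0:ℝ) 1 := by norm_num
  exact le_antisymm (hanti h0 hx hx.1) (hmono h0 hx hx.1)

lemma φ_zero : φ 0 = 1 := by
  unfold φ
  norm_num

lemma H_zero : H 0 = F26 1 := by
  rw [H, φ_zero]
  simp [F26]

end Sin26Aux

open Sin26Aux in
/-- `sin_{2,6}⁶(π_{2,6}/4) = (3√3−5)/4`. -/
theorem sin_two_six_at_quarter_pi :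
    F26 (((3 * Real.sqrt 3 - 5) / 4) ^ ((1:ℝ)/6)) = F26 1 / 2 := by
  have h3 : Real.sqrt 3 ^ 2 = 3 := Real.sq_sqrt (by norm_num)
  have h3pos : 0 < Real.sqrt 3 := Real.sqrt_pos.2 (by norm_num)
  have h3lt : Real.sqrt 3 < 2 := by nlinarith
  have h3gt : 5 / 3 < Real.sqrt 3 := by nlinarith
  set c : ℝ := (3 * Real.sqrt 3 - 5) / 4 with hc_def
  have hc_pos : 0 < c := by rw [hc_def]; nlinarith
  set s : ℝ := c ^ ((1:ℝ)/6) with hs_def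
  have hs_pos : 0 < s := Real.rpow_pos_of_pos hc_pos _
  set d : ℝ := (Real.sqrt 3 - 1) / 2 with hd_def
  have hd_pos : 0 < d := by rw [hd_def]; nlinarith
  have hd_lt : d < 1 := by rw [hd_def]; nlinarith
  have hcd : c = d ^ 3 := by rw [hc_def, hd_def]; field_simp; nlinarith
  have hs2 : s ^ 2 = d := by
    have h1 : s ^ 2 = c ^ ((1:ℝ)/3) := by
      rw [hs_def, ← Real.rpow_natCast (c ^ ((1:ℝ)/6)) 2, ← Real.rpow_mul hc_pos.le]
      norm_num
    rw [h1, hcd, ← Real.rpow_natCast d 3, ← Real.rpow_mul hd_pos.le]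
    norm_num
  have hs1 : s < 1 := by nlinarith
  have hφs : φ s = s := by
    have harg : (1 - s ^ 2) / (1 + 2 * s ^ 2) = s ^ 2 := by
      rw [hs2, hd_def]
      rw [div_eq_iff (by nlinarith : (1:ℝ) + 2 * ((Real.sqrt 3 - 1)/2) ≠ 0)]
      nlinarith
    unfold φ
    rw [harg, Real.sqrt_sq hs_pos.le]
  have hsm : s ∈ Icc (0:ℝ) 1 := ⟨hs_pos.le, hs1.le⟩
  have hH := H_const hsm
  rw [H_zero] at hH
  rw [H, hφs] at hH
  linarith
end
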